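/- arXiv:0809.1555 — 6 statements merged into one kernel-verified Lean document; each statement's English description precedes it below -/
import Mathlib

section
/- Let a, b > 0 with 2a + b < 2 and define, for x ∈ (0, π), y₀(x) = (1/b)·(sin x)^{a/b}·(cot(x/2))^{1/b}·∫₀ˣ (sin t)^{-a/b}·(sin t)^{-1}·(tan(t/2))^{1/b} dt. Then lim_{x→0⁺} y₀(x) = 1/(1−a). -/
open MeasureTheory Set Filter Topology intervalIntegral
open scoped Real

lemma stmt6_contAt (a b : ℝ) (hb : 0 < b) (t : ℝ) (ht0 : 0 < t) (htπ : t < π) :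
    ContinuousAt
      (fun t => (Real.sin t) ^ (-(a/b)) * (Real.sin t)⁻¹ * (Real.tan (t/2)) ^ ((1:ℝ)/b)) t := by
  have hst : 0 < Real.sin t := Real.sin_pos_of_pos_of_lt_pi ht0 htπ
  have hct : 0 < Real.cos (t/2) := by
    apply Real.cos_pos_of_mem_Ioo
    constructor <;> [linarith [Real.pi_pos]; linarith]
  have h1 : ContinuousAt (fun t : ℝ => Real.tan (t/2)) t := by
    have h2 : ContinuousAt (fun s : ℝ => s/2) t := by fun_prop
    exact ContinuousAt.comp (g := Real.tan) (f := fun s : ℝ => s/2) (Real.continuousAt_tan.mpr hct.ne') h2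
  exact ((Real.continuous_sin.continuousAt.rpow_const (Or.inl hst.ne')).mul
    (Real.continuous_sin.continuousAt.inv₀ hst.ne')).mul
    (h1.rpow_const (Or.inl (Real.tan_pos_of_pos_of_lt_pi_div_two (by linarith) (by linarith)).ne'))

lemma stmt6_integrable (a b : ℝ) (ha : 0 < a) (hb : 0 < b) (hab : 2*a + b < 2)
    (x : ℝ) (hx0 : 0 < x) (hxπ : x < π) :
    IntervalIntegrable
      (fun t => (Real.sin t) ^ (-(a/b)) * (Real.sin t)⁻¹ * (Real.tan (t/2)) ^ ((1:ℝ)/b))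
      volume 0 x := by
  have ha1 : a < 1 := by linarith
  have hs : 0 < Real.sin x := Real.sin_pos_of_pos_of_lt_pi hx0 hxπ
  have hcx : 0 < Real.cos (x/2) := by
    apply Real.cos_pos_of_mem_Ioo
    constructor <;> [linarith [Real.pi_pos]; linarith]
  set c : ℝ := min (2/π) (Real.sin x / π) with hc_def
  have hc0 : 0 < c := lt_min (by positivity) (div_pos hs Real.pi_pos)
  set p : ℝ := (1 - a)/b - 1 with hp_def
  have hp : (-1:ℝ) < p := by
    have : 0 < (1 - a)/b := div_pos (by linarith) hb
    simp only [hp_def]; linarith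
  set M : ℝ := c ^ (-(a/b) - 1) * (2 * Real.cos (x/2))⁻¹ ^ ((1:ℝ)/b) with hM_def
  have hM0 : 0 < M :=
    mul_pos (Real.rpow_pos_of_pos hc0 _) (Real.rpow_pos_of_pos (by positivity) _)
  have hsin_low : ∀ t ∈ Ioc (0:ℝ) x, c * t ≤ Real.sin t := by
    rintro t ⟨ht0, htx⟩
    by_cases h : t ≤ π/2
    · calc c * t ≤ (2/π) * t := mul_le_mul_of_nonneg_right (min_le_left _ _) ht0.le
        _ ≤ Real.sin t := Real.mul_le_sin ht0.le h
    · push_neg at h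
      have h1 : Real.sin x ≤ Real.sin t := by
        have := Real.sin_le_sin_of_le_of_le_pi_div_two
          (x := π - x) (y := π - t) (by linarith) (by linarith) (by linarith)
        rwa [Real.sin_pi_sub, Real.sin_pi_sub] at this
      calc c * t ≤ (Real.sin x / π) * t := mul_le_mul_of_nonneg_right (min_le_right _ _) ht0.le
        _ ≤ (Real.sin x / π) * π := by
            apply mul_le_mul_of_nonneg_left (by linarith) (by positivity)
        _ = Real.sin x := div_mul_cancel₀ _ Real.pi_ne_zero
        _ ≤ Real.sin t := h1
  have htan_up : ∀ t ∈ Ioc (0:ℝ) x, Real.tan (t/2) ≤ t * (2 * Real.cos (x/2))⁻¹ := by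
    rintro t ⟨ht0, htx⟩
    have hct : Real.cos (x/2) ≤ Real.cos (t/2) :=
      Real.cos_le_cos_of_nonneg_of_le_pi (by linarith) (by linarith) (by linarith)
    rw [Real.tan_eq_sin_div_cos]
    have h1 : Real.sin (t/2) ≤ t/2 := Real.sin_le (by linarith)
    calc Real.sin (t/2) / Real.cos (t/2) ≤ (t/2) / Real.cos (x/2) :=
          div_le_div₀ (by linarith) h1 hcx hct
      _ = t * (2 * Real.cos (x/2))⁻¹ := by rw [div_div, div_eq_mul_inv]
  have hcomp : IntervalIntegrable (fun t => M * t ^ p) volume 0 x :=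
    (intervalIntegral.intervalIntegrable_rpow' hp).const_mul M
  apply hcomp.mono_fun'
  · apply ContinuousOn.aestronglyMeasurable _ measurableSet_uIoc
    intro t ht
    rw [uIoc_of_le hx0.le] at ht
    exact (stmt6_contAt a b hb t ht.1 (lt_of_le_of_lt ht.2 hxπ)).continuousWithinAt
  · rw [Filter.EventuallyLE, ae_restrict_iff' measurableSet_uIoc]
    apply Eventually.of_forall
    intro t ht
    rw [uIoc_of_le hx0.le] at ht
    obtain ⟨ht0, htx⟩ := ht
    have htπ : t < π := lt_of_le_of_lt htx hxπ
    have hst : 0 < Real.sin t := Real.sin_pos_of_pos_of_lt_pi ht0 htπ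
    have htt : 0 < Real.tan (t/2) :=
      Real.tan_pos_of_pos_of_lt_pi_div_two (by linarith) (by linarith)
    have hgt0 : 0 ≤ (Real.sin t) ^ (-(a/b)) * (Real.sin t)⁻¹ * (Real.tan (t/2)) ^ ((1:ℝ)/b) := by
      positivity
    rw [Real.norm_eq_abs, abs_of_nonneg hgt0]
    have e1 : (Real.sin t) ^ (-(a/b)) * (Real.sin t)⁻¹ = (Real.sin t) ^ (-(a/b) - 1) := by
      rw [Real.rpow_sub hst, Real.rpow_one]; ring
    rw [e1]
    have hb1 : (Real.sin t) ^ (-(a/b) - 1) ≤ (c * t) ^ (-(a/b) - 1) :=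
      Real.rpow_le_rpow_of_nonpos (by positivity) (hsin_low t ⟨ht0, htx⟩)
        (by have : 0 < a/b := div_pos ha hb; linarith)
    have hb2 : (Real.tan (t/2)) ^ ((1:ℝ)/b) ≤ (t * (2 * Real.cos (x/2))⁻¹) ^ ((1:ℝ)/b) :=
      Real.rpow_le_rpow htt.le (htan_up t ⟨ht0, htx⟩) (by positivity)
    calc (Real.sin t) ^ (-(a/b) - 1) * (Real.tan (t/2)) ^ ((1:ℝ)/b)
        ≤ (c * t) ^ (-(a/b) - 1) * (t * (2 * Real.cos (x/2))⁻¹) ^ ((1:ℝ)/b) := by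
          apply mul_le_mul hb1 hb2 (by positivity) (by positivity)
      _ = M * t ^ p := by
          rw [Real.mul_rpow hc0.le ht0.le, Real.mul_rpow ht0.le (by positivity)]
          rw [hM_def, hp_def]
          rw [show (1 - a)/b - 1 = (-(a/b) - 1) + (1:ℝ)/b by field_simp; ring]
          rw [Real.rpow_add ht0]
          ring

lemma stmt6_hasDerivG (a b : ℝ) (ha : 0 < a) (hb : 0 < b)
    (x : ℝ) (hx0 : 0 < x) (hxπ : x < π) :
    HasDerivAt (fun y => b * ((Real.sin y) ^ (-(a/b)) * (Real.tan (y/2)) ^ ((1:ℝ)/b)))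
      ((Real.sin x) ^ (-(a/b)) * (Real.tan (x/2)) ^ ((1:ℝ)/b) * (1 - a * Real.cos x)
        / Real.sin x) x := by
  have hs : 0 < Real.sin x := Real.sin_pos_of_pos_of_lt_pi hx0 hxπ
  have hc : 0 < Real.cos (x/2) := by
    apply Real.cos_pos_of_mem_Ioo
    constructor <;> [linarith [Real.pi_pos]; linarith]
  have ht : 0 < Real.tan (x/2) :=
    Real.tan_pos_of_pos_of_lt_pi_div_two (by linarith) (by linarith)
  have hs2 : 0 < Real.sin (x/2) := Real.sin_pos_of_pos_of_lt_pi (by linarith) (by linarith)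
  have h1 : HasDerivAt (fun y => (Real.sin y) ^ (-(a/b)))
      (Real.cos x * (-(a/b)) * (Real.sin x) ^ (-(a/b) - 1)) x :=
    (Real.hasDerivAt_sin x).rpow_const (Or.inl hs.ne')
  have h2 : HasDerivAt (fun y : ℝ => Real.tan (y/2)) (1 / Real.cos (x/2) ^ 2 * (1/2)) x := by
    have hhalf : HasDerivAt (fun y : ℝ => y/2) (1/2) x := by
      simpa using (hasDerivAt_id x).div_const 2
    exact (Real.hasDerivAt_tan hc.ne').comp x hhalf
  have h3 : HasDerivAt (fun y : ℝ => (Real.tan (y/2)) ^ ((1:ℝ)/b))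
      (1 / Real.cos (x/2) ^ 2 * (1/2) * ((1:ℝ)/b) * (Real.tan (x/2)) ^ ((1:ℝ)/b - 1)) x :=
    h2.rpow_const (Or.inl ht.ne')
  have h4 := (h1.mul h3).const_mul b
  refine h4.congr_deriv ?_
  symm
  have e1 : (Real.sin x) ^ (-(a/b) - 1) = (Real.sin x) ^ (-(a/b)) / Real.sin x := by
    rw [Real.rpow_sub hs, Real.rpow_one]
  have e2 : (Real.tan (x/2)) ^ ((1:ℝ)/b - 1) = (Real.tan (x/2)) ^ ((1:ℝ)/b) / Real.tan (x/2) := by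
    rw [Real.rpow_sub ht, Real.rpow_one]
  have e3 : Real.sin x = 2 * Real.sin (x/2) * Real.cos (x/2) := by
    rw [show x = 2*(x/2) by ring, Real.sin_two_mul]; ring_nf
  have e4 : Real.tan (x/2) = Real.sin (x/2) / Real.cos (x/2) := Real.tan_eq_sin_div_cos _
  rw [e1, e2]
  rw [e3, e4]
  field_simp
  ring


-- F tends to 0
lemma stmt6_F0 (a b : ℝ) (ha : 0 < a) (hb : 0 < b) (hab : 2*a + b < 2) :
    Tendsto (fun x => ∫ t in (0:ℝ)..x,
        (Real.sin t) ^ (-(a/b)) * (Real.sin t)⁻¹ * (Real.tan (t/2)) ^ ((1:ℝ)/b))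
      (nhdsWithin 0 (Ioi (0:ℝ))) (nhds 0) := by
  have hπ2 : (0:ℝ) < π/2 := by positivity
  have hint := stmt6_integrable a b ha hb hab (π/2) hπ2 (by linarith [Real.pi_pos])
  have hcont := intervalIntegral.continuousOn_primitive_interval' hint
    (left_mem_uIcc (a := (0:ℝ)) (b := π/2))
  have h0 : (0:ℝ) ∈ uIcc (0:ℝ) (π/2) := left_mem_uIcc
  have hcw := (hcont 0 h0).tendsto
  rw [intervalIntegral.integral_same] at hcw
  have : nhdsWithin (0:ℝ) (Ioi 0) ≤ nhdsWithin 0 (uIcc (0:ℝ) (π/2)) := by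
    rw [← nhdsWithin_Ioo_eq_nhdsGT hπ2]
    apply nhdsWithin_mono
    rw [uIcc_of_le hπ2.le]
    exact Ioo_subset_Icc_self
  exact hcw.mono_left this

-- G tends to 0
lemma stmt6_G0 (a b : ℝ) (ha : 0 < a) (hb : 0 < b) (hab : 2*a + b < 2) :
    Tendsto (fun x => b * ((Real.sin x) ^ (-(a/b)) * (Real.tan (x/2)) ^ ((1:ℝ)/b)))
      (nhdsWithin 0 (Ioi (0:ℝ))) (nhds 0) := by
  have ha1 : a < 1 := by linarith
  -- inner function tends to 0
  have hu : Tendsto (fun x : ℝ => (2:ℝ)^(-a) * (Real.sin (x/2))^(1-a) * (Real.cos (x/2))^(-a-1))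
      (nhdsWithin 0 (Ioi (0:ℝ))) (nhds 0) := by
    have h1 : Tendsto (fun x : ℝ => Real.sin (x/2)) (nhdsWithin 0 (Ioi (0:ℝ))) (nhds 0) := by
      have : Continuous fun x : ℝ => Real.sin (x/2) := by fun_prop
      have := this.tendsto 0
      simpa using this.mono_left nhdsWithin_le_nhds
    have h2 : Tendsto (fun x : ℝ => (Real.sin (x/2))^(1-a)) (nhdsWithin 0 (Ioi (0:ℝ)))
        (nhds 0) := by
      have := h1.rpow_const (p := 1-a) (Or.inr (by linarith))
      simpa [Real.zero_rpow (by linarith : (1:ℝ)-a ≠ 0)] using this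
    have h3 : Tendsto (fun x : ℝ => (Real.cos (x/2))^(-a-1)) (nhdsWithin 0 (Ioi (0:ℝ)))
        (nhds 1) := by
      have hc : Tendsto (fun x : ℝ => Real.cos (x/2)) (nhdsWithin 0 (Ioi (0:ℝ))) (nhds 1) := by
        have : Continuous fun x : ℝ => Real.cos (x/2) := by fun_prop
        have := this.tendsto 0
        simpa using this.mono_left nhdsWithin_le_nhds
      have := hc.rpow_const (p := -a-1) (Or.inl one_ne_zero)
      simpa using this
    have := (h2.const_mul ((2:ℝ)^(-a))).mul h3
    simpa using this
  -- G equals b * u^(1/b) on Ioo 0 π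
  have heq : ∀ x ∈ Ioo (0:ℝ) π,
      b * ((Real.sin x) ^ (-(a/b)) * (Real.tan (x/2)) ^ ((1:ℝ)/b))
        = b * (((2:ℝ)^(-a) * (Real.sin (x/2))^(1-a) * (Real.cos (x/2))^(-a-1)) ^ ((1:ℝ)/b)) := by
    rintro x ⟨hx0, hxπ⟩
    have hs : 0 < Real.sin x := Real.sin_pos_of_pos_of_lt_pi hx0 hxπ
    have hc : 0 < Real.cos (x/2) := by
      apply Real.cos_pos_of_mem_Ioo
      constructor <;> [linarith [Real.pi_pos]; linarith]
    have hs2 : 0 < Real.sin (x/2) := Real.sin_pos_of_pos_of_lt_pi (by linarith) (by linarith)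
    have ht : 0 < Real.tan (x/2) :=
      Real.tan_pos_of_pos_of_lt_pi_div_two (by linarith) (by linarith)
    congr 1
    have key : (Real.sin x) ^ (-(a/b)) = ((Real.sin x) ^ (-a)) ^ ((1:ℝ)/b) := by
      rw [← Real.rpow_mul hs.le]
      congr 1
      field_simp
    rw [key, ← Real.mul_rpow (Real.rpow_nonneg hs.le _) ht.le]
    congr 1
    have e3 : Real.sin x = 2 * Real.sin (x/2) * Real.cos (x/2) := by
      rw [show x = 2*(x/2) by ring, Real.sin_two_mul]; ring_nf
    rw [Real.tan_eq_sin_div_cos, e3]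
    rw [Real.mul_rpow (by positivity) hc.le, Real.mul_rpow (by positivity) hs2.le]
    rw [show (1:ℝ) - a = 1 + (-a) by ring, Real.rpow_add hs2, Real.rpow_one,
      show -a - 1 = -a + (-1) by ring, Real.rpow_add hc, Real.rpow_neg_one]
    field_simp
  have := (hu.rpow_const (p := (1:ℝ)/b) (Or.inr (by positivity))).const_mul b
  rw [Real.zero_rpow (by positivity : (1:ℝ)/b ≠ 0), mul_zero] at this
  apply this.congr'
  filter_upwards [Ioo_mem_nhdsGT_of_mem (α := ℝ)
    (show (0:ℝ) ∈ Ico (0:ℝ) π from ⟨le_refl _, Real.pi_pos⟩)] with x hx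
  exact (heq x hx).symm

/-- For `a, b > 0` with `2a + b < 2`, the function
`y₀(x) = (1/b)(sin x)^{a/b}(cot(x/2))^{1/b} ∫₀ˣ (sin t)^{-a/b}(sin t)⁻¹(tan(t/2))^{1/b} dt`
satisfies `lim_{x→0⁺} y₀(x) = 1/(1−a)`. -/
theorem stmt6 (a b : ℝ) (ha : 0 < a) (hb : 0 < b) (hab : 2*a + b < 2) :
    Tendsto
      (fun x : ℝ => (1/b) * (Real.sin x) ^ (a/b) * (Real.cot (x/2)) ^ ((1:ℝ)/b) *
        ∫ t in (0:ℝ)..x, (Real.sin t) ^ (-(a/b)) * (Real.sin t)⁻¹ * (Real.tan (t/2)) ^ ((1:ℝ)/b))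
      (nhdsWithin 0 (Ioo (0:ℝ) π)) (nhds (1/(1-a))) := by
  have ha1 : a < 1 := by linarith
  rw [nhdsWithin_Ioo_eq_nhdsGT Real.pi_pos]
  -- notation
  set g : ℝ → ℝ :=
    fun t => (Real.sin t) ^ (-(a/b)) * (Real.sin t)⁻¹ * (Real.tan (t/2)) ^ ((1:ℝ)/b) with hg_def
  set G' : ℝ → ℝ := fun x =>
    (Real.sin x) ^ (-(a/b)) * (Real.tan (x/2)) ^ ((1:ℝ)/b) * (1 - a * Real.cos x) / Real.sin x
    with hG'_def
  -- positivity facts on Ioo 0 π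
  have hfacts : ∀ x ∈ Ioo (0:ℝ) π, 0 < Real.sin x ∧ 0 < Real.tan (x/2) ∧
      0 < 1 - a * Real.cos x := by
    rintro x ⟨hx0, hxπ⟩
    refine ⟨Real.sin_pos_of_pos_of_lt_pi hx0 hxπ,
      Real.tan_pos_of_pos_of_lt_pi_div_two (by linarith) (by linarith), ?_⟩
    have h1 : a * Real.cos x ≤ a := by
      nlinarith [Real.cos_le_one x]
    linarith
  -- L'Hopital
  have hF' : ∀ x ∈ Ioo (0:ℝ) π, HasDerivAt (fun x => ∫ t in (0:ℝ)..x, g t) (g x) x := by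
    intro x hx
    exact intervalIntegral.integral_hasDerivAt_right
      (stmt6_integrable a b ha hb hab x hx.1 hx.2)
      (ContinuousAt.stronglyMeasurableAtFilter isOpen_Ioo
        (fun t ht => stmt6_contAt a b hb t ht.1 ht.2) x hx)
      (stmt6_contAt a b hb x hx.1 hx.2)
  have hG' : ∀ x ∈ Ioo (0:ℝ) π,
      HasDerivAt (fun y => b * ((Real.sin y) ^ (-(a/b)) * (Real.tan (y/2)) ^ ((1:ℝ)/b)))
        (G' x) x := fun x hx => stmt6_hasDerivG a b ha hb x hx.1 hx.2
  have hG'ne : ∀ x ∈ Ioo (0:ℝ) π, G' x ≠ 0 := by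
    intro x hx
    obtain ⟨hs, ht, hac⟩ := hfacts x hx
    have : 0 < G' x := by
      rw [hG'_def]
      have h1 : 0 < (Real.sin x) ^ (-(a/b)) := Real.rpow_pos_of_pos hs _
      have h2 : 0 < (Real.tan (x/2)) ^ ((1:ℝ)/b) := Real.rpow_pos_of_pos ht _
      positivity
    exact this.ne'
  have hdiv : Tendsto (fun x => g x / G' x) (nhdsWithin 0 (Ioi (0:ℝ))) (nhds (1/(1-a))) := by
    have hlim : Tendsto (fun x : ℝ => (1 - a * Real.cos x)⁻¹)
        (nhdsWithin 0 (Ioi (0:ℝ))) (nhds (1/(1-a))) := by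
      have hc : Continuous fun x : ℝ => 1 - a * Real.cos x := by fun_prop
      have h0 : (1:ℝ) - a * Real.cos 0 = 1 - a := by simp
      have := (hc.tendsto 0).inv₀ (by rw [h0]; intro h; linarith [h])
      rw [h0] at this
      simpa [one_div] using this.mono_left nhdsWithin_le_nhds
    apply hlim.congr'
    filter_upwards [Ioo_mem_nhdsGT_of_mem (show (0:ℝ) ∈ Ico (0:ℝ) π from
      ⟨le_refl _, Real.pi_pos⟩)] with x hx
    obtain ⟨hs, ht, hac⟩ := hfacts x hx
    have h1 : (Real.sin x) ^ (-(a/b)) ≠ 0 := (Real.rpow_pos_of_pos hs _).ne'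
    have h2 : (Real.tan (x/2)) ^ ((1:ℝ)/b) ≠ 0 := (Real.rpow_pos_of_pos ht _).ne'
    rw [hg_def, hG'_def]
    field_simp
  have hmain := HasDerivAt.lhopital_zero_right_on_Ioo Real.pi_pos hF' hG' hG'ne
    (stmt6_F0 a b ha hb hab) (stmt6_G0 a b ha hb hab) hdiv
  -- convert to the stated form
  apply hmain.congr'
  filter_upwards [Ioo_mem_nhdsGT_of_mem (show (0:ℝ) ∈ Ico (0:ℝ) π from
    ⟨le_refl _, Real.pi_pos⟩)] with x hx
  obtain ⟨hs, ht, hac⟩ := hfacts x hx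
  have h1 : (Real.sin x) ^ (-(a/b)) ≠ 0 := (Real.rpow_pos_of_pos hs _).ne'
  have h2 : (Real.tan (x/2)) ^ ((1:ℝ)/b) ≠ 0 := (Real.rpow_pos_of_pos ht _).ne'
  have hcot : Real.cot (x/2) = (Real.tan (x/2))⁻¹ := by
    rw [Real.cot_eq_cos_div_sin, Real.tan_eq_sin_div_cos, inv_div]
  have hcotp : (Real.cot (x/2)) ^ ((1:ℝ)/b) = ((Real.tan (x/2)) ^ ((1:ℝ)/b))⁻¹ := by
    rw [hcot, ← Real.inv_rpow ht.le]
  have hsinp : (Real.sin x) ^ (a/b) = ((Real.sin x) ^ (-(a/b)))⁻¹ := by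
    rw [← Real.rpow_neg hs.le, neg_neg]
  rw [hcotp, hsinp]
  have key : ∀ (F A B : ℝ), A ≠ 0 → B ≠ 0 →
      F / (b * (A * B)) = 1/b * A⁻¹ * B⁻¹ * F := by
    intro F A B hA hB
    rw [div_eq_mul_inv, mul_inv, mul_inv]
    ring
  exact key _ _ _ h1 h2
end

section
/- Let a, b > 0 with 2a + b < 2 and y₀ as above on (0, π). Then lim_{x→π⁻} y₀(x) = 1/(1+a). -/
open MeasureTheory Set Filter Topology intervalIntegral
open scoped Real

noncomputable def Gf (a b t : ℝ) : ℝ := Real.sin t ^ (-(a/b)) * Real.tan (t/2) ^ ((1:ℝ)/b)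

lemma Gf_pos (a b : ℝ) {t : ℝ} (ht : t ∈ Ioo 0 π) : 0 < Gf a b t := by
  obtain ⟨ht0, htp⟩ := ht
  have hsin : 0 < Real.sin t := Real.sin_pos_of_pos_of_lt_pi ht0 htp
  have htan : 0 < Real.tan (t/2) :=
    Real.tan_pos_of_pos_of_lt_pi_div_two (by linarith) (by linarith)
  exact mul_pos (Real.rpow_pos_of_pos hsin _) (Real.rpow_pos_of_pos htan _)

lemma Gf_zero (a b : ℝ) (ha : 0 < a) (hb : 0 < b) : Gf a b 0 = 0 := by
  have h : a/b ≠ 0 := by positivity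
  simp [Gf, Real.zero_rpow (neg_ne_zero.mpr h)]

lemma Gf_contOn (a b : ℝ) : ContinuousOn (Gf a b) (Ioo 0 π) := by
  intro t ht
  obtain ⟨ht0, htp⟩ := ht
  have hsin : 0 < Real.sin t := Real.sin_pos_of_pos_of_lt_pi ht0 htp
  have hcos2 : 0 < Real.cos (t/2) := Real.cos_pos_of_mem_Ioo ⟨by linarith [Real.pi_pos], by linarith⟩
  have h1 : ContinuousAt (fun x => Real.sin x ^ (-(a/b))) t :=
    ContinuousAt.comp (g := fun y : ℝ => y ^ (-(a/b)))
      (Real.continuousAt_rpow_const _ _ (Or.inl hsin.ne')) Real.continuous_sin.continuousAt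
  have h2 : ContinuousAt (fun x : ℝ => Real.tan (x/2)) t :=
    ContinuousAt.comp (g := Real.tan) (f := fun x : ℝ => x/2)
      (Real.continuousAt_tan.2 hcos2.ne') ((continuous_id.div_const 2).continuousAt)
  have htan : 0 < Real.tan (t/2) :=
    Real.tan_pos_of_pos_of_lt_pi_div_two (by linarith) (by linarith)
  have h3 : ContinuousAt (fun x : ℝ => Real.tan (x/2) ^ ((1:ℝ)/b)) t :=
    ContinuousAt.comp (g := fun y : ℝ => y ^ ((1:ℝ)/b))
      (Real.continuousAt_rpow_const _ _ (Or.inl htan.ne')) h2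
  exact (h1.mul h3).continuousWithinAt

-- G tends to 0 at 0⁺
lemma Gf_tendsto_zero (a b : ℝ) (ha : 0 < a) (hb : 0 < b) (ha1 : a < 1) :
    Tendsto (Gf a b) (𝓝[>] 0) (𝓝 0) := by
  have hbound : ∀ᶠ t in 𝓝[>] (0:ℝ), Gf a b t ≤ ((3/4 : ℝ) ^ (-(a/b))) * (t ^ ((1-a)/b)) := by
    filter_upwards [Ioo_mem_nhdsGT_of_mem (by norm_num : (0:ℝ) ∈ Ico 0 1)] with t ht
    obtain ⟨ht0, ht1⟩ := ht
    have hsin_lb : 3/4 * t ≤ Real.sin t := by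
      have := Real.sin_gt_sub_cube ht0
      have ht3 : t^3 ≤ t := by nlinarith [sq_nonneg t, mul_pos ht0 ht0]
      linarith
    have htan_ub : Real.tan (t/2) ≤ t := by
      have hc : Real.cos (1/2) ≤ Real.cos (t/2) := by
        apply Real.cos_le_cos_of_nonneg_of_le_pi (by linarith) (by linarith [Real.pi_gt_three])
        linarith
      have hc2 : (1/2 : ℝ) ≤ Real.cos (t/2) := by
        have := Real.cos_lt_cos_of_nonneg_of_le_pi (x := 1/2) (y := π/3) (by norm_num)
        have h3 : Real.cos (π/3) = 1/2 := Real.cos_pi_div_three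
        nlinarith [Real.cos_le_one (1/2:ℝ), Real.pi_gt_three, hc,
          Real.cos_lt_cos_of_nonneg_of_le_pi (by norm_num : (0:ℝ) ≤ 1/2)
            (by linarith [Real.pi_gt_three] : π/3 ≤ π) (by nlinarith [Real.pi_gt_three])]
      rw [Real.tan_eq_sin_div_cos]
      rw [div_le_iff₀ (by linarith)]
      calc Real.sin (t/2) ≤ t/2 := Real.sin_le (by linarith)
        _ ≤ t * Real.cos (t/2) := by nlinarith
    have ht34 : (0:ℝ) < 3/4 * t := by linarith
    have h1 : Real.sin t ^ (-(a/b)) ≤ (3/4 * t) ^ (-(a/b)) :=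
      Real.rpow_le_rpow_of_nonpos ht34 hsin_lb (neg_nonpos.mpr (by positivity))
    have htanpos : 0 ≤ Real.tan (t/2) :=
      (Real.tan_pos_of_pos_of_lt_pi_div_two (by linarith) (by nlinarith [Real.pi_gt_three])).le
    have h2 : Real.tan (t/2) ^ ((1:ℝ)/b) ≤ t ^ ((1:ℝ)/b) :=
      Real.rpow_le_rpow htanpos htan_ub (by positivity)
    have hGf : Gf a b t ≤ (3/4 * t) ^ (-(a/b)) * t ^ ((1:ℝ)/b) := by
      unfold Gf
      exact mul_le_mul h1 h2 (Real.rpow_nonneg htanpos _) (Real.rpow_nonneg ht34.le _)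
    calc Gf a b t ≤ (3/4 * t) ^ (-(a/b)) * t ^ ((1:ℝ)/b) := hGf
      _ = (3/4 : ℝ) ^ (-(a/b)) * (t ^ ((1-a)/b)) := by
          rw [Real.mul_rpow (by norm_num) ht0.le, mul_assoc,
            ← Real.rpow_add ht0]
          ring_nf
  have hC : ContinuousAt (fun y : ℝ => ((3/4 : ℝ) ^ (-(a/b))) * (y ^ ((1-a)/b))) 0 := by
    apply ContinuousAt.mul continuousAt_const
    exact Real.continuousAt_rpow_const _ _ (Or.inr (le_of_lt (div_pos (by linarith) hb)))
  have hup : Tendsto (fun y : ℝ => ((3/4 : ℝ) ^ (-(a/b))) * (y ^ ((1-a)/b))) (𝓝[>] 0) (𝓝 0) := by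
    have := hC.tendsto.mono_left (nhdsWithin_le_nhds (s := Ioi (0:ℝ)))
    simpa [Real.zero_rpow (ne_of_gt (div_pos (by linarith) hb) : ((1-a)/b : ℝ) ≠ 0)] using this
  have hlow : ∀ᶠ t in 𝓝[>] (0:ℝ), 0 ≤ Gf a b t := by
    filter_upwards [Ioo_mem_nhdsGT_of_mem (by norm_num : (0:ℝ) ∈ Ico 0 1)] with t ht
    exact (Gf_pos a b ⟨ht.1, by nlinarith [Real.pi_gt_three, ht.2]⟩).le
  exact tendsto_of_tendsto_of_tendsto_of_le_of_le' tendsto_const_nhds hup hlow hbound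

lemma Gf_contAt (a b : ℝ) {t : ℝ} (ht : t ∈ Ioo 0 π) : ContinuousAt (Gf a b) t := by
  obtain ⟨ht0, htp⟩ := ht
  have hsin : 0 < Real.sin t := Real.sin_pos_of_pos_of_lt_pi ht0 htp
  have hcos2 : 0 < Real.cos (t/2) := Real.cos_pos_of_mem_Ioo ⟨by linarith [Real.pi_pos], by linarith⟩
  have h1 : ContinuousAt (fun x => Real.sin x ^ (-(a/b))) t :=
    ContinuousAt.comp (g := fun y : ℝ => y ^ (-(a/b)))
      (Real.continuousAt_rpow_const _ _ (Or.inl hsin.ne')) Real.continuous_sin.continuousAt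
  have h2 : ContinuousAt (fun x : ℝ => Real.tan (x/2)) t :=
    ContinuousAt.comp (g := Real.tan) (f := fun x : ℝ => x/2)
      (Real.continuousAt_tan.2 hcos2.ne') ((continuous_id.div_const 2).continuousAt)
  have htan : 0 < Real.tan (t/2) :=
    Real.tan_pos_of_pos_of_lt_pi_div_two (by linarith) (by linarith)
  have h3 : ContinuousAt (fun x : ℝ => Real.tan (x/2) ^ ((1:ℝ)/b)) t :=
    ContinuousAt.comp (g := fun y : ℝ => y ^ ((1:ℝ)/b))
      (Real.continuousAt_rpow_const _ _ (Or.inl htan.ne')) h2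
  exact h1.mul h3

lemma Gf_contIcc (a b : ℝ) (ha : 0 < a) (hb : 0 < b) (ha1 : a < 1) {x : ℝ} (hx : x ∈ Ioo 0 π) :
    ContinuousOn (Gf a b) (Icc 0 x) := by
  intro t ht
  rcases eq_or_lt_of_le ht.1 with h0 | h0
  · have : ContinuousWithinAt (Gf a b) (Ioi 0) 0 := by
      rw [ContinuousWithinAt, Gf_zero a b ha hb]
      exact Gf_tendsto_zero a b ha hb ha1
    rw [← h0]
    exact (continuousWithinAt_Ioi_iff_Ici.mp this).mono (fun y hy => hy.1)
  · exact (Gf_contAt a b ⟨h0, lt_of_le_of_lt ht.2 hx.2⟩).continuousWithinAt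

lemma Gf_top (a b : ℝ) (ha : 0 < a) (hb : 0 < b) :
    Tendsto (Gf a b) (𝓝[Ioo 0 π] π) atTop := by
  have hsin : Tendsto Real.sin (𝓝[Ioo 0 π] π) (𝓝[>] 0) := by
    apply tendsto_nhdsWithin_of_tendsto_nhds_of_eventually_within
    · have : Tendsto Real.sin (𝓝 π) (𝓝 0) := by
        have h := Real.continuous_sin.continuousAt (x := π)
        rwa [ContinuousAt, Real.sin_pi] at h
      exact this.mono_left nhdsWithin_le_nhds
    · exact eventually_nhdsWithin_of_forall fun t ht => Real.sin_pos_of_pos_of_lt_pi ht.1 ht.2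
  have hrpow : Tendsto (fun y : ℝ => y ^ (-(a/b))) (𝓝[>] 0) atTop := by
    have h1 : Tendsto (fun y : ℝ => y ^ (a/b)) (𝓝[>] 0) (𝓝[>] 0) := by
      apply tendsto_nhdsWithin_of_tendsto_nhds_of_eventually_within
      · have := (Real.continuousAt_rpow_const 0 (a/b) (Or.inr (by positivity))).tendsto
        rw [Real.zero_rpow (by positivity : (a/b : ℝ) ≠ 0)] at this
        exact this.mono_left nhdsWithin_le_nhds
      · exact eventually_nhdsWithin_of_forall fun y hy => Real.rpow_pos_of_pos hy _
    have h2 := h1.inv_tendsto_nhdsGT_zero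
    apply h2.congr'
    filter_upwards [self_mem_nhdsWithin] with y (hy : (0:ℝ) < y)
    simp [Real.rpow_neg hy.le]
  have htan : Tendsto (fun x : ℝ => Real.tan (x/2)) (𝓝[Ioo 0 π] π) atTop := by
    apply Real.tendsto_tan_pi_div_two.comp
    apply tendsto_nhdsWithin_of_tendsto_nhds_of_eventually_within
    · exact ((continuous_id.div_const 2).tendsto π).mono_left nhdsWithin_le_nhds
    · exact eventually_nhdsWithin_of_forall fun t ht => by simpa using (by linarith [ht.2] : t/2 < π/2)
  have h3 : Tendsto (fun x : ℝ => Real.tan (x/2) ^ ((1:ℝ)/b)) (𝓝[Ioo 0 π] π) atTop :=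
    (tendsto_rpow_atTop (by positivity)).comp htan
  exact (hrpow.comp hsin).atTop_mul_atTop₀ h3

noncomputable def Df (a b t : ℝ) : ℝ := Gf a b t * ((1 - a * Real.cos t)/(b * Real.sin t))

lemma Gf_hasDerivAt (a b : ℝ) (ha : 0 < a) (hb : 0 < b) {t : ℝ} (ht : t ∈ Ioo 0 π) :
    HasDerivAt (Gf a b) (Df a b t) t := by
  obtain ⟨ht0, htp⟩ := ht
  have hsin : 0 < Real.sin t := Real.sin_pos_of_pos_of_lt_pi ht0 htp
  have h2 : 0 < t/2 := by linarith
  have h2' : t/2 < π/2 := by linarith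
  have hcos2 : 0 < Real.cos (t/2) := Real.cos_pos_of_mem_Ioo ⟨by linarith [Real.pi_pos], h2'⟩
  have htan : 0 < Real.tan (t/2) := Real.tan_pos_of_pos_of_lt_pi_div_two h2 h2'
  have h1 : HasDerivAt (fun x => Real.sin x ^ (-(a/b)))
      (Real.cos t * (-(a/b)) * Real.sin t ^ (-(a/b) - 1)) t :=
    (Real.hasDerivAt_sin t).rpow_const (Or.inl hsin.ne')
  have h2d : HasDerivAt (fun x : ℝ => Real.tan (x/2)) (1 / Real.cos (t/2) ^ 2 * (1/2)) t := by
    have := (Real.hasDerivAt_tan hcos2.ne').comp t ((hasDerivAt_id t).div_const 2)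
    simpa [Function.comp_def] using this
  have h3 : HasDerivAt (fun x : ℝ => Real.tan (x/2) ^ ((1:ℝ)/b))
      (1 / Real.cos (t/2) ^ 2 * (1/2) * ((1:ℝ)/b) * Real.tan (t/2) ^ ((1:ℝ)/b - 1)) t :=
    h2d.rpow_const (Or.inl htan.ne')
  have h4 := h1.mul h3
  refine HasDerivAt.congr_deriv (f := Gf a b) h4 ?_
  symm
  have hs2 : Real.sin t = 2 * Real.sin (t/2) * Real.cos (t/2) := by
    rw [show t = 2 * (t/2) by ring, Real.sin_two_mul]; ring_nf
  have hsin2 : 0 < Real.sin (t/2) := Real.sin_pos_of_pos_of_lt_pi h2 (by linarith)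
  have key : Real.tan (t/2) = Real.sin t / (2 * Real.cos (t/2)^2) := by
    rw [Real.tan_eq_sin_div_cos, hs2]; field_simp
  rw [Real.rpow_sub_one hsin.ne', Real.rpow_sub_one htan.ne']
  unfold Df Gf
  set A := Real.sin t ^ (-(a/b)) with hA
  set B := Real.tan (t/2) ^ ((1:ℝ)/b) with hB
  rw [key]
  field_simp
  ring

noncomputable def Pf (a b t : ℝ) : ℝ := b / (1 - a * Real.cos t)

lemma one_sub_pos (a : ℝ) (ha : 0 < a) (ha1 : a < 1) (t : ℝ) : 0 < 1 - a * Real.cos t := by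
  nlinarith [Real.cos_le_one t, Real.neg_one_le_cos t]

lemma Df_nonneg (a b : ℝ) (ha : 0 < a) (hb : 0 < b) (ha1 : a < 1) {t : ℝ} (ht : t ∈ Ioo 0 π) :
    0 ≤ Df a b t := by
  have hsin : 0 < Real.sin t := Real.sin_pos_of_pos_of_lt_pi ht.1 ht.2
  have h1 := one_sub_pos a ha ha1 t
  have h2 := Gf_pos a b ht
  exact mul_nonneg h2.le (div_nonneg h1.le (by positivity))

lemma Df_contOn (a b : ℝ) (hb : 0 < b) : ContinuousOn (Df a b) (Ioo 0 π) := by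
  intro t ht
  have hsin : 0 < Real.sin t := Real.sin_pos_of_pos_of_lt_pi ht.1 ht.2
  apply ContinuousWithinAt.mul ((Gf_contAt a b ht).continuousWithinAt)
  apply ContinuousWithinAt.div
  · exact (continuousWithinAt_const.sub ((continuous_const.mul Real.continuous_cos).continuousWithinAt))
  · exact (continuous_const.mul Real.continuous_sin).continuousWithinAt
  · positivity

lemma Pf_cont (a b : ℝ) (ha : 0 < a) (ha1 : a < 1) : Continuous (Pf a b) := by
  apply continuous_const.div
  · exact continuous_const.sub (continuous_const.mul Real.continuous_cos)
  · exact fun t => (one_sub_pos a ha ha1 t).ne'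

lemma Df_integrableOn (a b : ℝ) (ha : 0 < a) (hb : 0 < b) (ha1 : a < 1) {x : ℝ}
    (hx : x ∈ Ioo 0 π) : IntegrableOn (Df a b) (Ioc 0 x) := by
  apply integrableOn_deriv_of_nonneg
    ((Gf_contIcc a b ha hb ha1 hx))
    (fun t ht => Gf_hasDerivAt a b ha hb ⟨ht.1, ht.2.trans hx.2⟩)
    (fun t ht => Df_nonneg a b ha hb ha1 ⟨ht.1, ht.2.trans hx.2⟩)

lemma Df_intervalIntegrable (a b : ℝ) (ha : 0 < a) (hb : 0 < b) (ha1 : a < 1) {x : ℝ}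
    (hx : x ∈ Ioo 0 π) : IntervalIntegrable (Df a b) volume 0 x :=
  (intervalIntegrable_iff_integrableOn_Ioc_of_le hx.1.le).mpr (Df_integrableOn a b ha hb ha1 hx)

lemma ftc (a b : ℝ) (ha : 0 < a) (hb : 0 < b) (ha1 : a < 1) {x : ℝ} (hx : x ∈ Ioo 0 π) :
    ∫ t in (0:ℝ)..x, Df a b t = Gf a b x := by
  have := integral_eq_sub_of_hasDeriv_right_of_le hx.1.le (Gf_contIcc a b ha hb ha1 hx)
    (fun t ht => (Gf_hasDerivAt a b ha hb ⟨ht.1, ht.2.trans hx.2⟩).hasDerivWithinAt)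
    (Df_intervalIntegrable a b ha hb ha1 hx)
  rw [this, Gf_zero a b ha hb, sub_zero]

lemma integrand_eq (a b : ℝ) (ha : 0 < a) (hb : 0 < b) (ha1 : a < 1) {x : ℝ} (hx : x ∈ Ioo 0 π)
    {t : ℝ} (ht : t ∈ Icc 0 x) :
    Real.sin t ^ (-(a/b) - 1) * Real.tan (t/2) ^ ((1:ℝ)/b) = Df a b t * Pf a b t := by
  rcases eq_or_lt_of_le ht.1 with h0 | h0
  · rw [← h0]
    have he : (-(a/b) - 1 : ℝ) ≠ 0 := by
      have : (0:ℝ) < a/b := by positivity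
      linarith
    simp [Df, Gf, Real.zero_rpow he, Real.zero_rpow (neg_ne_zero.mpr (by positivity : (a/b:ℝ) ≠ 0))]
  · have hsin : 0 < Real.sin t := Real.sin_pos_of_pos_of_lt_pi h0 (lt_of_le_of_lt ht.2 hx.2)
    have hone := one_sub_pos a ha ha1 t
    unfold Df Pf Gf
    rw [Real.rpow_sub_one hsin.ne']
    field_simp

lemma Pf_bound (a b : ℝ) (ha : 0 < a) (hb : 0 < b) (ha1 : a < 1) (t : ℝ) :
    |Pf a b t| ≤ b / (1 - a) := by
  have h1 := one_sub_pos a ha ha1 t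
  have h2 : (1 - a : ℝ) ≤ 1 - a * Real.cos t := by nlinarith [Real.cos_le_one t]
  show |b / (1 - a * Real.cos t)| ≤ b / (1 - a)
  rw [abs_of_pos (div_pos hb h1)]
  exact div_le_div_of_nonneg_left hb.le (by linarith) h2

lemma Df_mul_intervalIntegrable (a b : ℝ) (ha : 0 < a) (hb : 0 < b) (ha1 : a < 1)
    (h : ℝ → ℝ) (hc : Continuous h) (C : ℝ) (hC : ∀ t, |h t| ≤ C) {x : ℝ} (hx : x ∈ Ioo 0 π) :
    IntervalIntegrable (fun t => Df a b t * h t) volume 0 x := by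
  rw [intervalIntegrable_iff_integrableOn_Ioc_of_le hx.1.le]
  have hsub : Ioc 0 x ⊆ Ioo 0 π := fun t ht => ⟨ht.1, lt_of_le_of_lt ht.2 hx.2⟩
  apply Integrable.mono' ((Df_integrableOn a b ha hb ha1 hx).const_mul C)
  · exact (((Df_contOn a b hb).mono hsub).mul hc.continuousOn).aestronglyMeasurable
      measurableSet_Ioc
  · rw [ae_restrict_iff' measurableSet_Ioc]
    filter_upwards with t ht
    have hDf := Df_nonneg a b ha hb ha1 (hsub ht)
    calc ‖Df a b t * h t‖ = Df a b t * |h t| := by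
          rw [norm_mul, Real.norm_eq_abs, Real.norm_eq_abs, abs_of_nonneg hDf]
      _ ≤ Df a b t * C := by
          apply mul_le_mul_of_nonneg_left (hC t) hDf
      _ = C * Df a b t := mul_comm _ _

lemma main_tendsto (a b : ℝ) (ha : 0 < a) (hb : 0 < b) (ha1 : a < 1) :
    Tendsto (fun x => (∫ t in (0:ℝ)..x, Df a b t * Pf a b t) / Gf a b x)
      (𝓝[Ioo 0 π] π) (𝓝 (b/(1+a))) := by
  set L : ℝ := b/(1+a) with hL
  rw [Metric.tendsto_nhds]
  intro ε hε
  -- continuity of Pf at π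
  have hPfπ : Pf a b π = L := by
    simp [Pf, hL, Real.cos_pi]
  have hPc : ContinuousAt (Pf a b) π := (Pf_cont a b ha ha1).continuousAt
  rw [Metric.continuousAt_iff] at hPc
  obtain ⟨δ, hδ, hPδ⟩ := hPc (ε/4) (by positivity)
  -- choice of c
  set c : ℝ := max (π/2) (π - δ/2) with hc
  have hc0 : 0 < c := lt_max_of_lt_left (by positivity)
  have hcπ : c < π := by
    apply max_lt (by linarith [Real.pi_pos]) (by linarith)
  have hcmem : c ∈ Ioo 0 π := ⟨hc0, hcπ⟩
  have hπc : π - c ≤ δ/2 := by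
    have := le_max_right (π/2) (π - δ/2)
    linarith [this]
  set ψ : ℝ → ℝ := fun t => Pf a b t - L with hψ
  have hψc : Continuous ψ := (Pf_cont a b ha ha1).sub continuous_const
  have hψb : ∀ t, |ψ t| ≤ b/(1-a) + L := by
    intro t
    have := Pf_bound a b ha hb ha1 t
    have hL0 : 0 ≤ L := by positivity
    calc |ψ t| ≤ |Pf a b t| + |L| := abs_sub _ _
      _ ≤ b/(1-a) + L := by rw [abs_of_nonneg hL0]; linarith
  set M : ℝ := |∫ t in (0:ℝ)..c, Df a b t * ψ t| with hM
  have hM0 : 0 ≤ M := abs_nonneg _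
  -- eventual facts
  have E2 : ∀ᶠ x in 𝓝[Ioo 0 π] π, c < x :=
    (eventually_gt_nhds hcπ).filter_mono nhdsWithin_le_nhds
  have E3 : ∀ᶠ x in 𝓝[Ioo 0 π] π, 4*(M+1)/ε ≤ Gf a b x :=
    (Gf_top a b ha hb).eventually_ge_atTop _
  filter_upwards [self_mem_nhdsWithin, E2, E3] with x hx hcx hGx
  have hGpos : 0 < Gf a b x := Gf_pos a b hx
  have hGbig : 4*(M+1)/ε ≤ Gf a b x := hGx
  -- integrability facts
  have hint1 : IntervalIntegrable (fun t => Df a b t * Pf a b t) volume 0 x :=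
    Df_mul_intervalIntegrable a b ha hb ha1 _ (Pf_cont a b ha ha1) _
      (Pf_bound a b ha hb ha1) hx
  have hint2 : IntervalIntegrable (fun t => Df a b t * ψ t) volume 0 x :=
    Df_mul_intervalIntegrable a b ha hb ha1 ψ hψc _ hψb hx
  have hintD : IntervalIntegrable (Df a b) volume 0 x := Df_intervalIntegrable a b ha hb ha1 hx
  have hsub : uIcc c x ⊆ uIcc 0 x := by
    rw [uIcc_of_le hcx.le, uIcc_of_le hx.1.le]
    exact Set.Icc_subset_Icc hc0.le le_rfl
  have hint2c : IntervalIntegrable (fun t => Df a b t * ψ t) volume 0 c :=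
    Df_mul_intervalIntegrable a b ha hb ha1 ψ hψc _ hψb hcmem
  have hint2cx : IntervalIntegrable (fun t => Df a b t * ψ t) volume c x := hint2.mono_set hsub
  have hintDc : IntervalIntegrable (Df a b) volume 0 c := Df_intervalIntegrable a b ha hb ha1 hcmem
  have hintDcx : IntervalIntegrable (Df a b) volume c x := hintD.mono_set hsub
  -- key identity
  have hkey : (∫ t in (0:ℝ)..x, Df a b t * Pf a b t) - L * Gf a b x
      = ∫ t in (0:ℝ)..x, Df a b t * ψ t := by
    have : ∀ t, Df a b t * ψ t = Df a b t * Pf a b t - L * Df a b t := by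
      intro t; simp only [hψ]; ring
    rw [intervalIntegral.integral_congr (fun t _ => this t),
      intervalIntegral.integral_sub hint1 (hintD.const_mul L),
      intervalIntegral.integral_const_mul, ftc a b ha hb ha1 hx]
  -- split
  have hsplit : (∫ t in (0:ℝ)..x, Df a b t * ψ t)
      = (∫ t in (0:ℝ)..c, Df a b t * ψ t) + ∫ t in c..x, Df a b t * ψ t :=
    (intervalIntegral.integral_add_adjacent_intervals hint2c hint2cx).symm
  -- bound on second piece
  have hDint_cx : (∫ t in c..x, Df a b t) = Gf a b x - Gf a b c := by
    have h1 := intervalIntegral.integral_add_adjacent_intervals hintDc hintDcx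
    rw [ftc a b ha hb ha1 hx, ftc a b ha hb ha1 hcmem] at *
    linarith [h1]
  have hbound2 : |∫ t in c..x, Df a b t * ψ t| ≤ (ε/4) * Gf a b x := by
    have h1 : |∫ t in c..x, Df a b t * ψ t| ≤ ∫ t in c..x, |Df a b t * ψ t| :=
      intervalIntegral.abs_integral_le_integral_abs hcx.le
    have h2 : (∫ t in c..x, |Df a b t * ψ t|) ≤ ∫ t in c..x, Df a b t * (ε/4) := by
      apply intervalIntegral.integral_mono_on hcx.le hint2cx.abs
        (hintDcx.mul_const (ε/4))
      intro t ht
      have htIoo : t ∈ Ioo 0 π := ⟨lt_of_lt_of_le hc0 ht.1, lt_of_le_of_lt ht.2 hx.2⟩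
      have hDf := Df_nonneg a b ha hb ha1 htIoo
      have hdist : dist t π < δ := by
        rw [Real.dist_eq, abs_of_nonpos (by linarith [htIoo.2] : t - π ≤ 0)]
        have : c ≤ t := ht.1
        linarith [htIoo.2]
      have hψsmall : |ψ t| ≤ ε/4 := by
        have := hPδ hdist
        rw [Real.dist_eq, hPfπ] at this
        exact le_of_lt this
      rw [abs_mul, abs_of_nonneg hDf]
      exact mul_le_mul_of_nonneg_left hψsmall hDf
    have h3 : (∫ t in c..x, Df a b t * (ε/4)) = (Gf a b x - Gf a b c) * (ε/4) := by
      rw [intervalIntegral.integral_mul_const, hDint_cx]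
    have hGc : 0 < Gf a b c := Gf_pos a b hcmem
    calc |∫ t in c..x, Df a b t * ψ t| ≤ ∫ t in c..x, Df a b t * (ε/4) := le_trans h1 h2
      _ = (Gf a b x - Gf a b c) * (ε/4) := h3
      _ ≤ Gf a b x * (ε/4) := by nlinarith
      _ = (ε/4) * Gf a b x := mul_comm _ _
  -- final estimate
  rw [Real.dist_eq]
  have key2 : (∫ t in (0:ℝ)..x, Df a b t * Pf a b t) / Gf a b x - L
      = ((∫ t in (0:ℝ)..x, Df a b t * ψ t)) / Gf a b x := by
    rw [← hkey]; field_simp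
  rw [key2, abs_div, abs_of_pos hGpos, div_lt_iff₀ hGpos]
  have habs : |∫ t in (0:ℝ)..x, Df a b t * ψ t| ≤ M + (ε/4) * Gf a b x := by
    rw [hsplit]
    calc |(∫ t in (0:ℝ)..c, Df a b t * ψ t) + ∫ t in c..x, Df a b t * ψ t|
        ≤ M + |∫ t in c..x, Df a b t * ψ t| := by rw [hM]; exact abs_add_le _ _
      _ ≤ M + (ε/4) * Gf a b x := by linarith [hbound2]
  have hMG : M ≤ (ε/4) * Gf a b x := by
    rw [div_le_iff₀ hε] at hGbig
    nlinarith
  calc |∫ t in (0:ℝ)..x, Df a b t * ψ t| ≤ M + (ε/4) * Gf a b x := habs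
    _ ≤ (ε/4) * Gf a b x + (ε/4) * Gf a b x := by linarith
    _ = (ε/2) * Gf a b x := by ring
    _ < ε * Gf a b x := by nlinarith

/-- For `a, b > 0` with `2a + b < 2`, the function
`y₀(x) = (1/b)(sin x)^{a/b}(cot(x/2))^{1/b} ∫₀ˣ (sin t)^{-a/b-1}(tan(t/2))^{1/b} dt`
satisfies `lim_{x→π⁻} y₀(x) = 1/(1+a)`. -/
theorem stmt7 (a b : ℝ) (ha : 0 < a) (hb : 0 < b) (hab : 2*a + b < 2) :
    Tendsto
      (fun x : ℝ => (1/b) * (Real.sin x) ^ (a/b) * (Real.cot (x/2)) ^ ((1:ℝ)/b) *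
        ∫ t in (0:ℝ)..x, (Real.sin t) ^ (-(a/b) - 1) * (Real.tan (t/2)) ^ ((1:ℝ)/b))
      (nhdsWithin π (Ioo (0:ℝ) π)) (nhds (1/(1+a))) := by
  have ha1 : a < 1 := by linarith
  have hmain := (main_tendsto a b ha hb ha1).div_const b
  have hval : (b/(1+a))/b = 1/(1+a) := by
    have hA : (1+a) ≠ 0 := by linarith
    field_simp
  rw [hval] at hmain
  apply hmain.congr'
  filter_upwards [self_mem_nhdsWithin] with x hx
  obtain ⟨hx0, hxπ⟩ := hx
  have hsin : 0 < Real.sin x := Real.sin_pos_of_pos_of_lt_pi hx0 hxπ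
  have hcos2 : 0 < Real.cos (x/2) :=
    Real.cos_pos_of_mem_Ioo ⟨by linarith [Real.pi_pos], by linarith⟩
  have hsin2 : 0 < Real.sin (x/2) := Real.sin_pos_of_pos_of_lt_pi (by linarith) (by linarith)
  have htan : 0 < Real.tan (x/2) :=
    Real.tan_pos_of_pos_of_lt_pi_div_two (by linarith) (by linarith)
  have hN : (∫ t in (0:ℝ)..x, (Real.sin t) ^ (-(a/b) - 1) * (Real.tan (t/2)) ^ ((1:ℝ)/b))
      = ∫ t in (0:ℝ)..x, Df a b t * Pf a b t := by
    apply intervalIntegral.integral_congr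
    intro t ht
    rw [uIcc_of_le hx0.le] at ht
    exact integrand_eq a b ha hb ha1 ⟨hx0, hxπ⟩ ht
  have hcot : Real.cot (x/2) ^ ((1:ℝ)/b) = (Real.tan (x/2) ^ ((1:ℝ)/b))⁻¹ := by
    rw [Real.cot_eq_cos_div_sin, Real.tan_eq_sin_div_cos, ← inv_div, Real.inv_rpow]
    positivity
  have hS : Real.sin x ^ (a/b) = (Real.sin x ^ (-(a/b)))⁻¹ := by
    rw [← Real.rpow_neg hsin.le, neg_neg]
  have hGne : Gf a b x ≠ 0 := (Gf_pos a b ⟨hx0, hxπ⟩).ne'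
  have hT : Real.tan (x/2) ^ ((1:ℝ)/b) ≠ 0 := (Real.rpow_pos_of_pos htan _).ne'
  have hSn : Real.sin x ^ (-(a/b)) ≠ 0 := (Real.rpow_pos_of_pos hsin _).ne'
  rw [hN, hcot, hS]
  show (∫ t in (0:ℝ)..x, Df a b t * Pf a b t) / Gf a b x / b = _
  unfold Gf
  field_simp
end

section
/- For a, b > 0 with 2a + b < 2, the homogeneous solution h(x) = (sin x)^{a/b}·(cot(x/2))^{1/b} on (0, π) is not square integrable near 0; more precisely, h(x) ≍ 2^{1/b}·x^{(a−1)/b} as x → 0⁺ and (a−1)/b < −1/2. -/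
open MeasureTheory Set Filter Topology
open scoped Real

/-- For `a, b > 0` with `2a + b < 2`, the homogeneous solution
`h(x) = (sin x)^{a/b}·(cot(x/2))^{1/b}` on `(0, π)` is not square integrable near `0`;
more precisely `h(x)·x^{(1−a)/b} → 2^{1/b}` as `x → 0⁺` and `(a−1)/b < −1/2`. -/
theorem stmt9 (a b : ℝ) (ha : 0 < a) (hb : 0 < b) (hab : 2*a + b < 2) :
    ¬ MemLp (fun x : ℝ => (Real.sin x) ^ (a/b) * (Real.cot (x/2)) ^ ((1:ℝ)/b)) 2
        (volume.restrict (Ioo (0:ℝ) π)) ∧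
    Tendsto
      (fun x : ℝ => ((Real.sin x) ^ (a/b) * (Real.cot (x/2)) ^ ((1:ℝ)/b)) * x ^ ((1-a)/b))
      (nhdsWithin 0 (Ioo (0:ℝ) π)) (nhds ((2:ℝ) ^ ((1:ℝ)/b))) ∧
    (a - 1)/b < -(1/2) := by
  have hp : (a - 1)/b < -(1/2) := by
    rw [div_lt_iff₀ hb]; nlinarith
  -- basic positivity facts on Ioo 0 π
  have hpos : ∀ x ∈ Ioo (0:ℝ) π, 0 < Real.sin x ∧ 0 < Real.sin (x/2) ∧ 0 < Real.cos (x/2) := by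
    intro x hx
    refine ⟨Real.sin_pos_of_pos_of_lt_pi hx.1 hx.2, ?_, ?_⟩
    · exact Real.sin_pos_of_pos_of_lt_pi (by linarith [hx.1]) (by linarith [hx.2, Real.pi_pos])
    · exact Real.cos_pos_of_mem_Ioo ⟨by linarith [hx.1, Real.pi_pos], by linarith [hx.2]⟩
  -- sin y / y → 1
  have hslope : Tendsto (fun x : ℝ => Real.sin x / x) (𝓝[≠] 0) (𝓝 1) := by
    have := Real.hasDerivAt_sin 0
    rw [hasDerivAt_iff_tendsto_slope] at this
    rw [Real.cos_zero] at this
    refine this.congr fun x => ?_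
    simp [slope_def_field, div_eq_mul_inv, mul_comm]
  have hsub : Ioo (0:ℝ) π ⊆ {(0:ℝ)}ᶜ := fun x hx => ne_of_gt hx.1
  have hsin1 : Tendsto (fun x : ℝ => Real.sin x / x) (𝓝[Ioo (0:ℝ) π] 0) (𝓝 1) :=
    hslope.mono_left (nhdsWithin_mono _ hsub)
  -- map x ↦ x/2 into 𝓝[≠] 0
  have hhalf : Tendsto (fun x : ℝ => x/2) (𝓝[Ioo (0:ℝ) π] 0) (𝓝[≠] 0) := by
    apply tendsto_nhdsWithin_of_tendsto_nhds_of_eventually_within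
    · have : Tendsto (fun x : ℝ => x/2) (𝓝 0) (𝓝 (0/2)) :=
        (continuous_id.div_const 2).tendsto 0
      simpa using this.mono_left nhdsWithin_le_nhds
    · filter_upwards [self_mem_nhdsWithin] with x hx
      exact ne_of_gt (by linarith [hx.1] : (0:ℝ) < x/2)
  have hsin2 : Tendsto (fun x : ℝ => Real.sin (x/2) / (x/2)) (𝓝[Ioo (0:ℝ) π] 0) (𝓝 1) :=
    hslope.comp hhalf
  have hcos : Tendsto (fun x : ℝ => Real.cos (x/2)) (𝓝[Ioo (0:ℝ) π] 0) (𝓝 1) := by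
    have : Tendsto (fun x : ℝ => Real.cos (x/2)) (𝓝 0) (𝓝 (Real.cos (0/2))) :=
      (Real.continuous_cos.comp (continuous_id.div_const 2)).tendsto 0
    simpa using this.mono_left nhdsWithin_le_nhds
  -- x * cot(x/2) → 2
  have hcot : Tendsto (fun x : ℝ => x * Real.cot (x/2)) (𝓝[Ioo (0:ℝ) π] 0) (𝓝 2) := by
    have h2 : Tendsto (fun x : ℝ => 2 * Real.cos (x/2) / (Real.sin (x/2) / (x/2)))
        (𝓝[Ioo (0:ℝ) π] 0) (𝓝 2) := by
      have := ((hcos.const_mul 2).div hsin2 one_ne_zero)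
      simpa [Pi.div_def] using this
    refine h2.congr' ?_
    filter_upwards [self_mem_nhdsWithin] with x hx
    obtain ⟨_, hs2, _⟩ := hpos x hx
    have hx0 : (0:ℝ) < x := hx.1
    rw [Real.cot_eq_cos_div_sin]
    field_simp
  -- the product expression tends to 2^(1/b)
  have hT : Tendsto
      (fun x : ℝ => ((Real.sin x) ^ (a/b) * (Real.cot (x/2)) ^ ((1:ℝ)/b)) * x ^ ((1-a)/b))
      (𝓝[Ioo (0:ℝ) π] 0) (𝓝 ((2:ℝ) ^ ((1:ℝ)/b))) := by
    have h1 : Tendsto (fun x : ℝ => (Real.sin x / x) ^ (a/b))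
        (𝓝[Ioo (0:ℝ) π] 0) (𝓝 ((1:ℝ) ^ (a/b))) :=
      ((Real.continuousAt_rpow_const 1 (a/b) (Or.inl one_ne_zero)).tendsto).comp hsin1
    have h2 : Tendsto (fun x : ℝ => (x * Real.cot (x/2)) ^ ((1:ℝ)/b))
        (𝓝[Ioo (0:ℝ) π] 0) (𝓝 ((2:ℝ) ^ ((1:ℝ)/b))) :=
      ((Real.continuousAt_rpow_const 2 (1/b) (Or.inl two_ne_zero)).tendsto).comp hcot
    have hmul := h1.mul h2
    rw [Real.one_rpow, one_mul] at hmul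
    refine hmul.congr' ?_
    filter_upwards [self_mem_nhdsWithin] with x hx
    obtain ⟨hs, hs2, hc2⟩ := hpos x hx
    have hx0 : (0:ℝ) < x := hx.1
    have hcotpos : 0 < Real.cot (x/2) := by
      rw [Real.cot_eq_cos_div_sin]; positivity
    have hxr : x ^ ((1-a)/b) = x ^ ((1:ℝ)/b) / x ^ (a/b) := by
      rw [show (1-a)/b = 1/b - a/b by ring, Real.rpow_sub hx0]
    rw [Real.div_rpow hs.le hx0.le, Real.mul_rpow hx0.le hcotpos.le, hxr]
    have hxa : (0:ℝ) < x ^ (a/b) := Real.rpow_pos_of_pos hx0 _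
    field_simp
  refine ⟨?_, hT, hp⟩
  -- non square integrability
  intro hmem
  have hint : IntegrableOn
      (fun x : ℝ => ‖(Real.sin x) ^ (a/b) * (Real.cot (x/2)) ^ ((1:ℝ)/b)‖ ^ ((2:ENNReal).toReal))
      (Ioo (0:ℝ) π) volume :=
    hmem.integrable_norm_rpow two_ne_zero ENNReal.ofNat_ne_top
  simp only [ENNReal.toReal_ofNat] at hint
  -- eventually the function dominates x ^ ((a-1)/b)
  have h1lt : (1:ℝ) < (2:ℝ) ^ ((1:ℝ)/b) :=
    Real.one_lt_rpow_iff_of_pos two_pos |>.mpr (Or.inl ⟨one_lt_two, by positivity⟩)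
  have hev : ∀ᶠ x in 𝓝[Ioo (0:ℝ) π] 0,
      x ^ ((a-1)/b) ≤ (Real.sin x) ^ (a/b) * (Real.cot (x/2)) ^ ((1:ℝ)/b) := by
    filter_upwards [hT.eventually (eventually_gt_nhds h1lt), self_mem_nhdsWithin] with x hx1 hx
    have hx0 : (0:ℝ) < x := hx.1
    have hxp : 0 < x ^ ((1-a)/b) := Real.rpow_pos_of_pos hx0 _
    have : 1 / x ^ ((1-a)/b) ≤ (Real.sin x) ^ (a/b) * (Real.cot (x/2)) ^ ((1:ℝ)/b) := by
      rw [div_le_iff₀ hxp]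
      linarith
    calc x ^ ((a-1)/b) = 1 / x ^ ((1-a)/b) := by
          rw [show (a-1)/b = -((1-a)/b) by ring, Real.rpow_neg hx0.le, one_div]
      _ ≤ _ := this
  rw [eventually_nhdsWithin_iff, Metric.eventually_nhds_iff] at hev
  obtain ⟨ε, hε, hevε⟩ := hev
  set δ := min ε π with hδdef
  have hδ : 0 < δ := lt_min hε Real.pi_pos
  -- the comparison on Ioo 0 δ
  have hdom : IntegrableOn (fun x : ℝ => x ^ (2 * ((a-1)/b))) (Ioo (0:ℝ) δ) volume := by
    have hint' : IntegrableOn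
        (fun x : ℝ => ‖(Real.sin x) ^ (a/b) * (Real.cot (x/2)) ^ ((1:ℝ)/b)‖ ^ (2:ℝ))
        (Ioo (0:ℝ) δ) volume :=
      hint.mono_set (Ioo_subset_Ioo le_rfl (min_le_right _ _))
    refine hint'.integrable.mono ?_ ?_
    · exact (by fun_prop : Measurable fun x : ℝ => x ^ (2 * ((a-1)/b))).aestronglyMeasurable
    · rw [ae_restrict_iff' measurableSet_Ioo]
      filter_upwards with x hx
      have hx0 : (0:ℝ) < x := hx.1
      have hxIoo : x ∈ Ioo (0:ℝ) π := ⟨hx.1, lt_of_lt_of_le hx.2 (min_le_right ε π)⟩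
      have hdist : dist x 0 < ε := by
        rw [Real.dist_eq, sub_zero, abs_of_pos hx0]
        exact lt_of_lt_of_le hx.2 (min_le_left ε π)
      have hle := hevε hdist hxIoo
      have hxp : 0 < x ^ ((a-1)/b) := Real.rpow_pos_of_pos hx0 _
      rw [Real.norm_eq_abs, abs_of_pos (Real.rpow_pos_of_pos hx0 _)]
      rw [show 2 * ((a-1)/b) = (a-1)/b * 2 by ring, Real.rpow_mul hx0.le]
      have h2 : (x ^ ((a-1)/b)) ^ (2:ℝ) ≤ ‖(Real.sin x) ^ (a/b) * (Real.cot (x/2)) ^ ((1:ℝ)/b)‖ ^ (2:ℝ) := by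
        apply Real.rpow_le_rpow hxp.le _ (by norm_num)
        exact hle.trans (le_abs_self _)
      calc (x ^ ((a-1)/b)) ^ (2:ℝ) ≤ _ := h2
        _ ≤ ‖‖(Real.sin x) ^ (a/b) * (Real.cot (x/2)) ^ ((1:ℝ)/b)‖ ^ (2:ℝ)‖ := le_abs_self _
  rw [intervalIntegral.integrableOn_Ioo_rpow_iff hδ] at hdom
  have : 2 * ((a-1)/b) < -1 := by linarith
  linarith
end

section
/- Let a, b > 0 with 2a + b < 2, u(x) = c + ∫₀ˣ φ(t) dt with φ ∈ L²(-π, π), and let y be given by y(x) = (1/b)(sin|x|)^{a/b}(cot(|x|/2))^{1/b} ∫₀ˣ u(t)(sin|t|)^{-a/b}(sin t)^{-1}(tan(|t|/2))^{1/b} dt. Then lim_{x→0} y(x) = c·y₀(0) = c/(1−a), where y₀ is the solution corresponding to u ≡ 1. -/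
open MeasureTheory Set Filter Topology intervalIntegral
open scoped Real

noncomputable def stF (a b s : ℝ) : ℝ := Real.sin s ^ (-(a/b)) * Real.tan (s/2) ^ ((1:ℝ)/b)
noncomputable def stW (a b s : ℝ) : ℝ := stF a b s / Real.sin s
noncomputable def stD (a b s : ℝ) : ℝ := stF a b s * ((1 - a * Real.cos s)/(b * Real.sin s))

lemma stF_zero (a b : ℝ) (ha : 0 < a) (hb : 0 < b) : stF a b 0 = 0 := by
  have : -(a/b) ≠ 0 := by have : 0 < a/b := div_pos ha hb; linarith
  simp [stF, Real.zero_rpow this]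

lemma stF_pos (a b : ℝ) {s : ℝ} (hs : s ∈ Ioo 0 π) : 0 < stF a b s := by
  have hS : 0 < Real.sin s := Real.sin_pos_of_pos_of_lt_pi hs.1 hs.2
  have hT : 0 < Real.tan (s/2) := Real.tan_pos_of_pos_of_lt_pi_div_two (by linarith [hs.1]) (by linarith [hs.2])
  exact mul_pos (Real.rpow_pos_of_pos hS _) (Real.rpow_pos_of_pos hT _)

lemma stF_deriv (a b : ℝ) (hb : 0 < b) {s : ℝ} (hs : s ∈ Ioo 0 π) :
    HasDerivAt (stF a b) (stD a b s) s := by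
  have hS : 0 < Real.sin s := Real.sin_pos_of_pos_of_lt_pi hs.1 hs.2
  have hc2 : 0 < Real.cos (s/2) := Real.cos_pos_of_mem_Ioo ⟨by nlinarith [hs.1, Real.pi_pos], by linarith [hs.2]⟩
  have hs2 : 0 < Real.sin (s/2) := Real.sin_pos_of_pos_of_lt_pi (by linarith [hs.1]) (by nlinarith [hs.2, Real.pi_pos])
  have hT : 0 < Real.tan (s/2) := Real.tan_pos_of_pos_of_lt_pi_div_two (by linarith [hs.1]) (by linarith [hs.2])
  have h1 : HasDerivAt (fun t => Real.sin t ^ (-(a/b)))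
      (Real.cos s * (-(a/b)) * Real.sin s ^ (-(a/b) - 1)) s :=
    (Real.hasDerivAt_sin s).rpow_const (Or.inl hS.ne')
  have h2 : HasDerivAt (fun t : ℝ => Real.tan (t/2)) (1 / Real.cos (s/2) ^ 2 * (1/2)) s := by
    exact (Real.hasDerivAt_tan hc2.ne').comp s ((hasDerivAt_id s).div_const 2)
  have h3 : HasDerivAt (fun t : ℝ => Real.tan (t/2) ^ ((1:ℝ)/b))
      ((1 / Real.cos (s/2) ^ 2 * (1/2)) * ((1:ℝ)/b) * Real.tan (s/2) ^ ((1:ℝ)/b - 1)) s :=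
    h2.rpow_const (Or.inl hT.ne')
  have h4 := h1.mul h3
  refine HasDerivAt.congr_deriv (f := stF a b) h4 ?_
  rw [Real.rpow_sub_one hS.ne', Real.rpow_sub_one hT.ne']
  have hsin : Real.sin s = 2 * Real.sin (s/2) * Real.cos (s/2) := by
    rw [← Real.sin_two_mul]; ring_nf
  rw [stD, stF]
  rw [Real.tan_eq_sin_div_cos]
  rw [hsin]
  field_simp
  ring

lemma stF_tendsto (a b : ℝ) (ha : 0 < a) (hb : 0 < b) (ha1 : a < 1) :
    Tendsto (stF a b) (𝓝[>] (0:ℝ)) (𝓝 0) := by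
  -- tan(s/2)/s → 1/2
  have hd : HasDerivAt (fun t : ℝ => Real.tan (t/2)) (1/2) 0 := by
    have hc : Real.cos (0/2 : ℝ) ≠ 0 := by norm_num
    have := (Real.hasDerivAt_tan hc).comp (0:ℝ) ((hasDerivAt_id (0:ℝ)).div_const 2)
    refine this.congr_deriv ?_
    norm_num
  rw [hasDerivAt_iff_tendsto_slope] at hd
  have htan : Tendsto (fun s : ℝ => Real.tan (s/2) / s) (𝓝[>] 0) (𝓝 (1/2)) := by
    have h := hd.mono_left (nhdsWithin_mono 0 (by intro x hx; exact ne_of_gt hx : Ioi (0:ℝ) ⊆ {(0:ℝ)}ᶜ))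
    refine h.congr (fun s => ?_)
    simp [slope_def_field, div_eq_mul_inv]
  -- sin s / s → 1, then s / sin s → 1
  have hds : HasDerivAt Real.sin 1 0 := by simpa using Real.hasDerivAt_sin 0
  rw [hasDerivAt_iff_tendsto_slope] at hds
  have hsin1 : Tendsto (fun s : ℝ => Real.sin s / s) (𝓝[>] 0) (𝓝 1) := by
    have h := hds.mono_left (nhdsWithin_mono 0 (by intro x hx; exact ne_of_gt hx : Ioi (0:ℝ) ⊆ {(0:ℝ)}ᶜ))
    refine h.congr (fun s => ?_)
    simp [slope_def_field, div_eq_mul_inv]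
  have hsin : Tendsto (fun s : ℝ => s / Real.sin s) (𝓝[>] 0) (𝓝 1) := by
    have := hsin1.inv₀ one_ne_zero
    simpa [inv_div] using this
  have hB : Tendsto (fun s : ℝ => (s / Real.sin s) ^ a) (𝓝[>] 0) (𝓝 1) := by
    have hco := (Real.continuousAt_rpow_const 1 a (Or.inl one_ne_zero)).tendsto
    have := hco.comp hsin
    simpa [Real.one_rpow, Function.comp_def] using this
  have hC : Tendsto (fun s : ℝ => s ^ (1-a)) (𝓝[>] 0) (𝓝 0) := by
    have hco := (Real.continuousAt_rpow_const 0 (1-a) (Or.inr (by linarith))).tendsto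
    have := hco.mono_left (nhdsWithin_le_nhds : 𝓝[Ioi (0:ℝ)] 0 ≤ 𝓝 0)
    simpa [Real.zero_rpow (show (1:ℝ)-a ≠ 0 by linarith)] using this
  have hprod : Tendsto (fun s : ℝ => Real.tan (s/2) / s * ((s / Real.sin s) ^ a * s ^ (1-a)))
      (𝓝[>] 0) (𝓝 0) := by
    have := htan.mul (hB.mul hC)
    simpa using this
  have houter := (Real.continuousAt_rpow_const 0 ((1:ℝ)/b) (Or.inr (by positivity))).tendsto
  have hcomp : Tendsto (fun s : ℝ => (Real.tan (s/2) / s * ((s / Real.sin s) ^ a * s ^ (1-a))) ^ ((1:ℝ)/b))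
      (𝓝[>] 0) (𝓝 0) := by
    have := houter.comp hprod
    simpa [Function.comp_def, Real.zero_rpow (show (b⁻¹:ℝ) ≠ 0 by positivity)] using this
  refine hcomp.congr' ?_
  have hmem : Ioo (0:ℝ) π ∈ 𝓝[>] (0:ℝ) := Ioo_mem_nhdsGT_of_mem ⟨le_refl 0, Real.pi_pos⟩
  filter_upwards [hmem] with s hs
  have hs0 : 0 < s := hs.1
  have hS : 0 < Real.sin s := Real.sin_pos_of_pos_of_lt_pi hs.1 hs.2
  have hT : 0 < Real.tan (s/2) := Real.tan_pos_of_pos_of_lt_pi_div_two (by linarith) (by linarith [hs.2])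
  have h5 : (s / Real.sin s) ^ a = s ^ a / Real.sin s ^ a := Real.div_rpow hs0.le hS.le a
  have h6 : s ^ a * s ^ (1-a) = s := by
    rw [← Real.rpow_add hs0]; norm_num
  have h7 : Real.tan (s/2) / s * ((s / Real.sin s) ^ a * s ^ (1-a)) = Real.tan (s/2) / Real.sin s ^ a := by
    rw [h5]
    field_simp
    rw [h6]
  rw [h7, Real.div_rpow hT.le (Real.rpow_pos_of_pos hS a).le,
    ← Real.rpow_mul hS.le, stF, Real.rpow_neg hS.le]
  rw [mul_one_div, div_eq_mul_inv, mul_comm]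

lemma stF_contIcc (a b : ℝ) (ha : 0 < a) (hb : 0 < b) (ha1 : a < 1) {r : ℝ}
    (hr0 : 0 < r) (hrπ : r < π) : ContinuousOn (stF a b) (Icc 0 r) := by
  intro s hs
  rcases eq_or_lt_of_le hs.1 with h | h
  · have h1 : ContinuousWithinAt (stF a b) (Ioi 0) 0 := by
      rw [ContinuousWithinAt, stF_zero a b ha hb]
      exact stF_tendsto a b ha hb ha1
    have h2 : ContinuousWithinAt (stF a b) (Ici 0) 0 := continuousWithinAt_Ioi_iff_Ici.mp h1
    rw [← h]
    exact h2.mono (fun x hx => hx.1)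
  · exact ((stF_deriv a b hb ⟨h, lt_of_le_of_lt hs.2 hrπ⟩).continuousAt).continuousWithinAt

lemma stmt17_key (a b : ℝ) (ha : 0 < a) (hb : 0 < b) (ha1 : a < 1) {r : ℝ} (hr0 : 0 < r) (hrπ : r < π)
    (c : ℂ) {ε₁ : ℝ} (hε₁ : 0 ≤ ε₁) (v : ℝ → ℂ)
    (hvm : AEStronglyMeasurable v (volume.restrict (Ioc 0 r)))
    (hvb : ∀ s ∈ Ioc 0 r, ‖v s - c‖ ≤ ε₁) :
    ‖(((b * stF a b r)⁻¹ : ℝ) : ℂ) * (∫ s in (0:ℝ)..r, v s * ((stW a b s : ℝ) : ℂ)) - c / ((1-a : ℝ) : ℂ)‖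
      ≤ ‖c‖ * (1/(1-a) - 1/(1 - a * Real.cos r)) + ε₁ * (1/(1-a)) := by
  have ha1' : (0:ℝ) < 1 - a := by linarith
  have hrmem : r ∈ Ioo 0 π := ⟨hr0, hrπ⟩
  have hF : 0 < stF a b r := stF_pos a b hrmem
  have hbF : 0 < b * stF a b r := by positivity
  have hsub : ∀ s, s ∈ Ioc 0 r → s ∈ Ioo 0 π := fun s hs => ⟨hs.1, lt_of_le_of_lt hs.2 hrπ⟩
  have hacos : ∀ s : ℝ, 0 < 1 - a * Real.cos s := by
    intro s
    nlinarith [Real.cos_le_one s, Real.neg_one_le_cos s]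
  have hacosr : 0 < 1 - a * Real.cos r := hacos r
  -- nonnegativity of D
  have hDnn : ∀ s ∈ Ioc 0 r, 0 ≤ stD a b s := by
    intro s hs
    have hs' := hsub s hs
    have hS : 0 < Real.sin s := Real.sin_pos_of_pos_of_lt_pi hs'.1 hs'.2
    have := stF_pos a b hs'
    have := hacos s
    rw [stD]; positivity
  have hD0 : stD a b 0 = 0 := by rw [stD, stF_zero a b ha hb]; ring
  have hW0 : stW a b 0 = 0 := by rw [stW, stF_zero a b ha hb]; simp
  have hcont := stF_contIcc a b ha hb ha1 hr0 hrπ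
  have hDint : IntervalIntegrable (stD a b) volume 0 r := by
    rw [intervalIntegrable_iff_integrableOn_Ioc_of_le hr0.le]
    exact intervalIntegral.integrableOn_deriv_of_nonneg hcont
      (fun s hs => stF_deriv a b hb ⟨hs.1, lt_of_lt_of_le hs.2 hrπ.le⟩)
      (fun s hs => hDnn s ⟨hs.1, hs.2.le⟩)
  have hFTC : ∫ s in (0:ℝ)..r, stD a b s = stF a b r := by
    have := intervalIntegral.integral_eq_sub_of_hasDeriv_right_of_le hr0.le hcont
      (fun s hs => (stF_deriv a b hb ⟨hs.1, lt_trans hs.2 hrπ⟩).hasDerivWithinAt) hDint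
    rw [this, stF_zero a b ha hb, sub_zero]
  -- relation between W and D on Ioc
  have hwD : ∀ s ∈ Ioc 0 r, stW a b s = stD a b s * (b / (1 - a * Real.cos s)) := by
    intro s hs
    have hs' := hsub s hs
    have hS : 0 < Real.sin s := Real.sin_pos_of_pos_of_lt_pi hs'.1 hs'.2
    have h1 := hacos s
    rw [stW, stD]
    field_simp
  have hWnn : ∀ s ∈ Ioc 0 r, 0 ≤ stW a b s := by
    intro s hs
    have hs' := hsub s hs
    have hS : 0 < Real.sin s := Real.sin_pos_of_pos_of_lt_pi hs'.1 hs'.2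
    have := stF_pos a b hs'
    rw [stW]; positivity
  -- pointwise bounds on Icc
  have hub : ∀ s ∈ Icc 0 r, stW a b s ≤ (b/(1-a)) * stD a b s := by
    intro s hs
    rcases eq_or_lt_of_le hs.1 with h | h
    · rw [← h, hW0, hD0]; simp
    · have hs' : s ∈ Ioc 0 r := ⟨h, hs.2⟩
      rw [hwD s hs', mul_comm]
      apply mul_le_mul_of_nonneg_right _ (hDnn s hs')
      apply div_le_div_of_nonneg_left hb.le ha1'
      nlinarith [Real.cos_le_one s]
  have hlb : ∀ s ∈ Icc 0 r, (b/(1 - a * Real.cos r)) * stD a b s ≤ stW a b s := by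
    intro s hs
    rcases eq_or_lt_of_le hs.1 with h | h
    · rw [← h, hW0, hD0]; simp
    · have hs' : s ∈ Ioc 0 r := ⟨h, hs.2⟩
      rw [hwD s hs', mul_comm (stD a b s)]
      apply mul_le_mul_of_nonneg_right _ (hDnn s hs')
      apply div_le_div_of_nonneg_left hb.le (hacos s)
      nlinarith [Real.cos_le_cos_of_nonneg_of_le_pi hs.1 hrπ.le hs.2]
  -- integrability of W
  have hWcont : ContinuousOn (stF a b) (Ioc 0 r) := hcont.mono Ioc_subset_Icc_self
  have hwint : IntervalIntegrable (stW a b) volume 0 r := by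
    rw [intervalIntegrable_iff_integrableOn_Ioc_of_le hr0.le]
    have hgint : IntegrableOn (fun s => (b/(1-a)) * stD a b s) (Ioc 0 r) volume := by
      have := (intervalIntegrable_iff_integrableOn_Ioc_of_le hr0.le).mp hDint
      exact this.const_mul _
    refine Integrable.mono' hgint ?_ ?_
    · have hWc : ContinuousOn (stW a b) (Ioc 0 r) := by
        apply hWcont.div (Real.continuous_sin.continuousOn)
        intro s hs
        exact (Real.sin_pos_of_pos_of_lt_pi (hsub s hs).1 (hsub s hs).2).ne'
      exact hWc.aestronglyMeasurable measurableSet_Ioc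
    · rw [ae_restrict_iff' measurableSet_Ioc]
      filter_upwards with s hs
      rw [Real.norm_eq_abs, abs_of_nonneg (hWnn s hs)]
      exact hub s ⟨hs.1.le, hs.2⟩
  -- bounds on J
  set J := ∫ s in (0:ℝ)..r, stW a b s with hJdef
  have hJub : J ≤ (b/(1-a)) * stF a b r := by
    have := intervalIntegral.integral_mono_on hr0.le hwint (hDint.const_mul (b/(1-a))) hub
    rwa [intervalIntegral.integral_const_mul, hFTC] at this
  have hJlb : (b/(1 - a*Real.cos r)) * stF a b r ≤ J := by
    have := intervalIntegral.integral_mono_on hr0.le ((hDint.const_mul (b/(1 - a*Real.cos r)))) hwint hlb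
    rwa [intervalIntegral.integral_const_mul, hFTC] at this
  have hJ0 : 0 ≤ J := le_trans (by positivity) hJlb
  -- integrability of v * W and c * W
  have hwintC : IntervalIntegrable (fun s => ((stW a b s : ℝ) : ℂ)) volume 0 r := by
    rw [intervalIntegrable_iff_integrableOn_Ioc_of_le hr0.le]
    exact ((intervalIntegrable_iff_integrableOn_Ioc_of_le hr0.le).mp hwint).ofReal
  have hvwint : IntervalIntegrable (fun s => v s * ((stW a b s : ℝ) : ℂ)) volume 0 r := by
    rw [intervalIntegrable_iff_integrableOn_Ioc_of_le hr0.le]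
    refine Integrable.bdd_mul (c := ‖c‖ + ε₁)
      ((intervalIntegrable_iff_integrableOn_Ioc_of_le hr0.le).mp hwintC) hvm ?_
    rw [ae_restrict_iff' measurableSet_Ioc]
    filter_upwards with s hs
    calc ‖v s‖ = ‖c + (v s - c)‖ := by ring_nf
    _ ≤ ‖c‖ + ‖v s - c‖ := norm_add_le _ _
    _ ≤ ‖c‖ + ε₁ := by linarith [hvb s hs]
  have hcwint : IntervalIntegrable (fun s => c * ((stW a b s : ℝ) : ℂ)) volume 0 r :=
    hwintC.const_mul c
  -- split the integral
  set I := ∫ s in (0:ℝ)..r, v s * ((stW a b s : ℝ) : ℂ) with hIdef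
  have hsplit : I - c * (J : ℂ) = ∫ s in (0:ℝ)..r, (v s - c) * ((stW a b s : ℝ) : ℂ) := by
    rw [intervalIntegral.integral_congr (g := fun s => v s * ((stW a b s : ℝ) : ℂ)
        - c * ((stW a b s : ℝ) : ℂ)) (fun s _ => by ring),
      intervalIntegral.integral_sub hvwint hcwint,
      intervalIntegral.integral_const_mul, intervalIntegral.integral_ofReal]
  have hEbound : ‖I - c * (J : ℂ)‖ ≤ ε₁ * J := by
    rw [hsplit]
    have h1 : ‖∫ s in (0:ℝ)..r, (v s - c) * ((stW a b s : ℝ) : ℂ)‖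
        ≤ |∫ s in (0:ℝ)..r, ε₁ * stW a b s| := by
      apply intervalIntegral.norm_integral_le_abs_of_norm_le _ (hwint.const_mul ε₁)
      rw [uIoc_of_le hr0.le, ae_restrict_iff' measurableSet_Ioc]
      filter_upwards with s hs
      rw [norm_mul, Complex.norm_real, Real.norm_eq_abs, abs_of_nonneg (hWnn s hs)]
      exact mul_le_mul_of_nonneg_right (hvb s hs) (hWnn s hs)
    rw [intervalIntegral.integral_const_mul] at h1
    rwa [abs_of_nonneg (by positivity)] at h1
  -- final assembly
  set P := (b * stF a b r)⁻¹ with hPdef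
  have hP : 0 < P := by positivity
  have hPJub : P * J ≤ 1/(1-a) := by
    have h1 : P * ((b/(1-a)) * stF a b r) = 1/(1-a) := by
      rw [hPdef]; field_simp
    calc P * J ≤ P * ((b/(1-a)) * stF a b r) := mul_le_mul_of_nonneg_left hJub hP.le
    _ = 1/(1-a) := h1
  have hPJlb : 1/(1 - a*Real.cos r) ≤ P * J := by
    have h1 : P * ((b/(1 - a*Real.cos r)) * stF a b r) = 1/(1 - a*Real.cos r) := by
      rw [hPdef]; field_simp
    calc (1:ℝ)/(1 - a*Real.cos r) = P * ((b/(1 - a*Real.cos r)) * stF a b r) := h1.symm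
    _ ≤ P * J := mul_le_mul_of_nonneg_left hJlb hP.le
  have hkey : ((P:ℝ):ℂ) * I - c / ((1-a:ℝ):ℂ)
      = ((P:ℝ):ℂ) * (I - c * (J:ℂ)) + c * (((P * J : ℝ):ℂ) - ((1/(1-a) : ℝ):ℂ)) := by
    push_cast
    have : ((1:ℂ) - (a:ℂ)) ≠ 0 := by
      simpa using Complex.ofReal_ne_zero.mpr (ne_of_gt ha1')
    field_simp
    ring
  rw [hkey]
  calc ‖((P:ℝ):ℂ) * (I - c * (J:ℂ)) + c * (((P * J : ℝ):ℂ) - ((1/(1-a) : ℝ):ℂ))‖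
      ≤ ‖((P:ℝ):ℂ) * (I - c * (J:ℂ))‖ + ‖c * (((P * J : ℝ):ℂ) - ((1/(1-a) : ℝ):ℂ))‖ := norm_add_le _ _
  _ = P * ‖I - c * (J:ℂ)‖ + ‖c‖ * |P * J - 1/(1-a)| := by
      rw [norm_mul, norm_mul, Complex.norm_real, Real.norm_eq_abs, abs_of_pos hP,
        ← Complex.ofReal_sub, Complex.norm_real, Real.norm_eq_abs]
  _ ≤ P * (ε₁ * J) + ‖c‖ * (1/(1-a) - 1/(1 - a*Real.cos r)) := by
      apply add_le_add
      · exact mul_le_mul_of_nonneg_left hEbound hP.le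
      · apply mul_le_mul_of_nonneg_left _ (norm_nonneg c)
        rw [abs_of_nonpos (by linarith)]
        linarith
  _ ≤ ‖c‖ * (1/(1-a) - 1/(1 - a * Real.cos r)) + ε₁ * (1/(1-a)) := by
      have : P * (ε₁ * J) = ε₁ * (P * J) := by ring
      rw [this]
      have h2 : ε₁ * (P * J) ≤ ε₁ * (1/(1-a)) := mul_le_mul_of_nonneg_left hPJub hε₁
      linarith

lemma stP_eq (a b : ℝ) (ha : 0 < a) (hb : 0 < b) {r : ℝ} (hr : r ∈ Ioo 0 π) :
    (1/b) * Real.sin r ^ (a/b) * Real.cot (r/2) ^ ((1:ℝ)/b) = (b * stF a b r)⁻¹ := by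
  have hS : 0 < Real.sin r := Real.sin_pos_of_pos_of_lt_pi hr.1 hr.2
  have hT : 0 < Real.tan (r/2) := Real.tan_pos_of_pos_of_lt_pi_div_two (by linarith [hr.1]) (by linarith [hr.2])
  have hcot : Real.cot (r/2) = (Real.tan (r/2))⁻¹ := by
    rw [Real.cot_eq_cos_div_sin, Real.tan_eq_sin_div_cos, inv_div]
  have hsr : Real.sin r ^ (a/b) = (Real.sin r ^ (-(a/b)))⁻¹ := by
    rw [Real.rpow_neg hS.le, inv_inv]
  rw [hcot, Real.inv_rpow hT.le, hsr, stF]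
  rw [mul_inv, mul_inv, one_div]
  ring

/-- For `a, b > 0` with `2a + b < 2`, `u(x) = c + ∫₀ˣ φ` with `φ ∈ L²`, and
`y(x) = (1/b)(sin|x|)^{a/b}(cot(|x|/2))^{1/b} ∫₀ˣ u(t)(sin|t|)^{-a/b}(sin t)⁻¹(tan(|t|/2))^{1/b} dt`,
one has `lim_{x→0} y(x) = c·y₀(0) = c/(1−a)`. -/
theorem stmt17 (a b : ℝ) (ha : 0 < a) (hb : 0 < b) (hab : 2*a + b < 2)
    (c : ℂ) (φ : ℝ → ℂ) (hφ : MemLp φ 2 (volume.restrict (Ioo (-π) π)))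
    (u : ℝ → ℂ) (hu : ∀ x, u x = c + ∫ t in (0:ℝ)..x, φ t)
    (y : ℝ → ℂ)
    (hy : ∀ x ∈ Ioo (-π) π \ {(0:ℝ)},
      y x = (((1/b) * (Real.sin |x|) ^ (a/b) * (Real.cot (|x|/2)) ^ ((1:ℝ)/b) : ℝ) : ℂ) *
        ∫ t in (0:ℝ)..x,
          u t * (((Real.sin |t|) ^ (-(a/b)) * (Real.sin t)⁻¹ *
            (Real.tan (|t|/2)) ^ ((1:ℝ)/b) : ℝ) : ℂ)) :
    Tendsto y (nhdsWithin 0 (Ioo (-π) π \ {(0:ℝ)})) (nhds (c / ((1 - a : ℝ) : ℂ))) := by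
  have ha1 : a < 1 := by linarith
  have ha1' : (0:ℝ) < 1 - a := by linarith
  -- the primitive of φ
  set ψ : ℝ → ℂ := (Ioo (-π) π).indicator φ with hψdef
  haveI : IsFiniteMeasure (volume.restrict (Ioo (-π) π)) :=
    ⟨by rw [Measure.restrict_apply_univ]; exact measure_Ioo_lt_top⟩
  have hφ1 : IntegrableOn φ (Ioo (-π) π) volume := MemLp.integrable (by norm_num) hφ
  have hψint : Integrable ψ := (integrable_indicator_iff measurableSet_Ioo).2 hφ1
  set prim : ℝ → ℂ := fun t => ∫ s in (0:ℝ)..t, ψ s with hprimdef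
  have hprimcont : Continuous prim :=
    intervalIntegral.continuous_primitive (fun a b => hψint.intervalIntegrable) 0
  have hprim_eq : ∀ t : ℝ, |t| < π → (∫ s in (0:ℝ)..t, φ s) = prim t := by
    intro t ht
    apply intervalIntegral.integral_congr
    intro s hs
    rw [hψdef]
    symm
    apply indicator_of_mem
    rw [uIcc_eq_union] at hs
    rcases hs with hs | hs
    · rcases abs_lt.mp ht with ⟨h1, h2⟩
      exact ⟨by linarith [hs.1], lt_of_le_of_lt hs.2 h2⟩
    · rcases abs_lt.mp ht with ⟨h1, h2⟩
      exact ⟨lt_of_lt_of_le h1 hs.1, lt_of_le_of_lt hs.2 Real.pi_pos⟩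
  rw [Metric.tendsto_nhdsWithin_nhds]
  intro ε hε
  set ε₁ : ℝ := ε * (1-a)/4 with hε₁def
  have hε₁pos : 0 < ε₁ := by positivity
  set ε₂ : ℝ := ε / (2*(‖c‖+1)) with hε₂def
  have hc1 : (0:ℝ) < ‖c‖ + 1 := by positivity
  have hε₂pos : 0 < ε₂ := by positivity
  -- δ₁ from continuity of prim at 0
  obtain ⟨δ₁, hδ₁pos, hδ₁⟩ := Metric.continuousAt_iff.1 hprimcont.continuousAt ε₁ hε₁pos
  have hprim0 : prim 0 = 0 := intervalIntegral.integral_same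
  have hδ₁' : ∀ t : ℝ, |t| < δ₁ → ‖prim t‖ ≤ ε₁ := by
    intro t ht
    have := hδ₁ (show dist t 0 < δ₁ by rwa [Real.dist_eq, sub_zero])
    rw [dist_eq_norm, hprim0, sub_zero] at this
    exact this.le
  -- δ₂ from continuity of r ↦ 1/(1 - a cos r) at 0
  have hacos : ∀ s : ℝ, 0 < 1 - a * Real.cos s := by
    intro s
    nlinarith [Real.cos_le_one s, Real.neg_one_le_cos s]
  have hgcont : Continuous (fun r : ℝ => 1/(1 - a * Real.cos r)) := by
    apply continuous_const.div
    · exact continuous_const.sub (continuous_const.mul Real.continuous_cos)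
    · exact fun s => (hacos s).ne'
  obtain ⟨δ₂, hδ₂pos, hδ₂⟩ := Metric.continuousAt_iff.1 hgcont.continuousAt ε₂ hε₂pos
  have hδ₂' : ∀ r : ℝ, |r| < δ₂ → 1/(1-a) - 1/(1 - a * Real.cos r) < ε₂ := by
    intro r hr
    have := hδ₂ (show dist r 0 < δ₂ by rwa [Real.dist_eq, sub_zero])
    rw [Real.dist_eq] at this
    have h0 : (1:ℝ)/(1 - a * Real.cos 0) = 1/(1-a) := by norm_num
    rw [h0] at this
    calc 1/(1-a) - 1/(1 - a * Real.cos r) ≤ |1/(1 - a*Real.cos r) - 1/(1-a)| := by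
          rw [abs_sub_comm]; exact le_abs_self _
    _ < ε₂ := this
  refine ⟨min δ₁ δ₂, lt_min hδ₁pos hδ₂pos, ?_⟩
  intro x hx hdist
  obtain ⟨hxmem, hxne⟩ := hx
  have hxne' : x ≠ 0 := hxne
  have hr0 : 0 < |x| := abs_pos.mpr hxne'
  have hrπ : |x| < π := abs_lt.mpr ⟨hxmem.1, hxmem.2⟩
  rw [Real.dist_eq, sub_zero] at hdist
  have hrδ₁ : |x| < δ₁ := lt_of_lt_of_le hdist (min_le_left _ _)
  have hrδ₂ : |x| < δ₂ := lt_of_lt_of_le hdist (min_le_right _ _)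
  -- generic final step
  have final : ∀ v : ℝ → ℂ, AEStronglyMeasurable v (volume.restrict (Ioc 0 |x|)) →
      (∀ s ∈ Ioc 0 |x|, ‖v s - c‖ ≤ ε₁) →
      dist ((((b * stF a b |x|)⁻¹ : ℝ) : ℂ) * ∫ s in (0:ℝ)..|x|, v s * ((stW a b s : ℝ) : ℂ))
        (c / ((1 - a : ℝ) : ℂ)) < ε := by
    intro v hvm hvb
    rw [Complex.dist_eq]
    have hkey := stmt17_key a b ha hb ha1 hr0 hrπ c hε₁pos.le v hvm hvb
    have hgap : 1/(1-a) - 1/(1 - a * Real.cos |x|) < ε₂ := hδ₂' _ (by rwa [abs_abs])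
    have hgap0 : 0 ≤ 1/(1-a) - 1/(1 - a * Real.cos |x|) := by
      have h1 : 1 - a ≤ 1 - a * Real.cos |x| := by nlinarith [Real.cos_le_one |x|]
      have := one_div_le_one_div_of_le ha1' h1
      linarith
    have h1 : ‖c‖ * (1/(1-a) - 1/(1 - a * Real.cos |x|)) ≤ ‖c‖ * ε₂ :=
      mul_le_mul_of_nonneg_left hgap.le (norm_nonneg c)
    have h2 : ‖c‖ * ε₂ < (‖c‖ + 1) * ε₂ := by nlinarith
    have h3 : (‖c‖ + 1) * ε₂ = ε/2 := by
      rw [hε₂def]; field_simp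
    have h4 : ε₁ * (1/(1-a)) = ε/4 := by
      rw [hε₁def]; field_simp
    calc ‖_ - _‖ ≤ ‖c‖ * (1/(1-a) - 1/(1 - a * Real.cos |x|)) + ε₁ * (1/(1-a)) := hkey
    _ < ε := by rw [h4]; linarith
  rcases lt_or_gt_of_ne hxne' with hneg | hpos
  · -- x < 0
    have habs : |x| = -x := abs_of_neg hneg
    rw [habs] at final hr0 hrπ hrδ₁
    rw [hy x ⟨hxmem, hxne⟩, habs]
    have hpre : ((1:ℝ)/b) * Real.sin (-x) ^ (a/b) * Real.cot ((-x)/2) ^ ((1:ℝ)/b)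
        = (b * stF a b (-x))⁻¹ := stP_eq a b ha hb ⟨hr0, hrπ⟩
    rw [hpre]
    have hWodd : EqOn
        (fun s => (fun t => u t * (((Real.sin |t|) ^ (-(a/b)) * (Real.sin t)⁻¹ *
            (Real.tan (|t|/2)) ^ ((1:ℝ)/b) : ℝ) : ℂ)) (-s))
        (fun s => -(u (-s) * ((stW a b s : ℝ) : ℂ))) (uIcc 0 (-x)) := by
      intro s hs
      rw [uIcc_of_le (by linarith : (0:ℝ) ≤ -x)] at hs
      have h1 : |(-s)| = s := by rw [abs_neg, abs_of_nonneg hs.1]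
      simp only [h1, Real.sin_neg]
      have h2 : ((Real.sin s ^ (-(a/b)) * (-Real.sin s)⁻¹ * Real.tan (s/2) ^ ((1:ℝ)/b) : ℝ) : ℂ)
          = -((stW a b s : ℝ) : ℂ) := by
        rw [← Complex.ofReal_neg]
        congr 1
        rw [stW, stF, div_eq_mul_inv]
        rw [inv_neg]
        ring
      rw [h2]
      ring
    have h2 : (∫ t in (0:ℝ)..x, u t * (((Real.sin |t|) ^ (-(a/b)) * (Real.sin t)⁻¹ *
            (Real.tan (|t|/2)) ^ ((1:ℝ)/b) : ℝ) : ℂ))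
        = ∫ s in (0:ℝ)..(-x), u (-s) * ((stW a b s : ℝ) : ℂ) := by
      have h3 := intervalIntegral.integral_comp_neg (a := (0:ℝ)) (b := -x)
        (fun t => u t * (((Real.sin |t|) ^ (-(a/b)) * (Real.sin t)⁻¹ *
            (Real.tan (|t|/2)) ^ ((1:ℝ)/b) : ℝ) : ℂ))
      rw [intervalIntegral.integral_congr hWodd, intervalIntegral.integral_neg, neg_neg, neg_zero] at h3
      have h4 := intervalIntegral.integral_symm (a := (0:ℝ)) (b := x)
        (f := fun t => u t * (((Real.sin |t|) ^ (-(a/b)) * (Real.sin t)⁻¹ *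
            (Real.tan (|t|/2)) ^ ((1:ℝ)/b) : ℝ) : ℂ)) (μ := volume)
      linear_combination h3 + h4
    rw [h2]
    apply final
    · have hcont2 : Continuous (fun s : ℝ => c + prim (-s)) :=
        continuous_const.add (hprimcont.comp continuous_neg)
      apply hcont2.aestronglyMeasurable.congr
      rw [Filter.EventuallyEq, ae_restrict_iff' measurableSet_Ioc]
      filter_upwards with s hs
      have hs' : |(-s)| < π := by rw [abs_neg, abs_of_nonneg hs.1.le]; linarith [hs.2]
      rw [hu (-s), hprim_eq (-s) hs']
    · intro s hs
      have hs' : |(-s)| < π := by rw [abs_neg, abs_of_nonneg hs.1.le]; linarith [hs.2]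
      rw [hu (-s), hprim_eq (-s) hs']
      simp only [add_sub_cancel_left]
      apply hδ₁' (-s)
      rw [abs_neg, abs_of_nonneg hs.1.le]
      linarith [hs.2]
  · -- 0 < x
    have habs : |x| = x := abs_of_pos hpos
    rw [habs] at final hr0 hrπ hrδ₁
    rw [hy x ⟨hxmem, hxne⟩, habs]
    have hpre : ((1:ℝ)/b) * Real.sin x ^ (a/b) * Real.cot (x/2) ^ ((1:ℝ)/b)
        = (b * stF a b x)⁻¹ := stP_eq a b ha hb ⟨hr0, hrπ⟩
    rw [hpre]
    have hW : EqOn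
        (fun t => u t * (((Real.sin |t|) ^ (-(a/b)) * (Real.sin t)⁻¹ *
            (Real.tan (|t|/2)) ^ ((1:ℝ)/b) : ℝ) : ℂ))
        (fun s => u s * ((stW a b s : ℝ) : ℂ)) (uIcc 0 x) := by
      intro t ht
      rw [uIcc_of_le hpos.le] at ht
      have h1 : |t| = t := abs_of_nonneg ht.1
      simp only [h1]
      congr 1
      congr 1
      rw [stW, stF, div_eq_mul_inv]
      ring
    rw [intervalIntegral.integral_congr hW]
    apply final
    · have hcont2 : Continuous (fun s : ℝ => c + prim s) := continuous_const.add hprimcont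
      apply hcont2.aestronglyMeasurable.congr
      rw [Filter.EventuallyEq, ae_restrict_iff' measurableSet_Ioc]
      filter_upwards with s hs
      have hs' : |s| < π := by rw [abs_of_nonneg hs.1.le]; linarith [hs.2]
      rw [hu s, hprim_eq s hs']
    · intro s hs
      have hs' : |s| < π := by rw [abs_of_nonneg hs.1.le]; linarith [hs.2]
      rw [hu s, hprim_eq s hs']
      simp only [add_sub_cancel_left]
      apply hδ₁' s
      rw [abs_of_nonneg hs.1.le]
      linarith [hs.2]
end

section
/- Let a, b > 0 with 2a + b < 2 and let y₀ be the even extension to (−π, π) of the function y₀(x) = (1/b)(sin x)^{a/b}(cot(x/2))^{1/b} ∫₀ˣ (sin t)^{-a/b-1}(tan(t/2))^{1/b} dt, x ∈ (0, π). Then y₀ extends to a continuous function on [−π, π] with y₀(−π) = y₀(π) = 1/(1+a) and y₀(0) = 1/(1−a); in particular y₀ satisfies periodic boundary conditions. -/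
open MeasureTheory Set intervalIntegral
open scoped Real

namespace Stmt18Aux

open Filter Topology

noncomputable def Hf (a b x : ℝ) : ℝ :=
  (1 - Real.cos x) ^ ((1-a)/(2*b)) * (1 + Real.cos x) ^ (-((1+a)/(2*b)))

noncomputable def Df (a b x : ℝ) : ℝ :=
  (Real.sin x * ((1-a)/(2*b)) * (1 - Real.cos x) ^ ((1-a)/(2*b) - 1)) *
      (1 + Real.cos x) ^ (-((1+a)/(2*b)))
  + (1 - Real.cos x) ^ ((1-a)/(2*b)) *
      (-Real.sin x * (-((1+a)/(2*b))) * (1 + Real.cos x) ^ (-((1+a)/(2*b)) - 1))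

noncomputable def fint (a b t : ℝ) : ℝ :=
  (Real.sin t) ^ (-(a/b) - 1) * (Real.tan (t/2)) ^ ((1:ℝ)/b)

lemma uv_pos {x : ℝ} (hx : x ∈ Ioo (0:ℝ) π) :
    0 < 1 - Real.cos x ∧ 0 < 1 + Real.cos x ∧ 0 < Real.sin x := by
  have hs : 0 < Real.sin x := Real.sin_pos_of_pos_of_lt_pi hx.1 hx.2
  have h1 : Real.cos x < 1 := by
    rcases lt_or_eq_of_le (Real.cos_le_one x) with h | h
    · exact h
    · exfalso; have := Real.sin_sq_add_cos_sq x; nlinarith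
  have h2 : -1 < Real.cos x := by
    rcases lt_or_eq_of_le (Real.neg_one_le_cos x) with h | h
    · exact h
    · exfalso; have := Real.sin_sq_add_cos_sq x; nlinarith
  exact ⟨by linarith, by linarith, hs⟩

lemma hasDeriv_Hf (a b : ℝ) {x : ℝ} (hx : x ∈ Ioo (0:ℝ) π) :
    HasDerivAt (Hf a b) (Df a b x) x := by
  obtain ⟨hu, hv, hs⟩ := uv_pos hx
  have h1 : HasDerivAt (fun y => 1 - Real.cos y) (Real.sin x) x := by
    simpa using (Real.hasDerivAt_cos x).const_sub 1
  have h2 : HasDerivAt (fun y => 1 + Real.cos y) (-Real.sin x) x := by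
    simpa using (Real.hasDerivAt_cos x).const_add 1
  have h1' := h1.rpow_const (p := (1-a)/(2*b)) (Or.inl hu.ne')
  have h2' := h2.rpow_const (p := -((1+a)/(2*b))) (Or.inl hv.ne')
  exact h1'.mul h2'

lemma sin_rpow_eq {x : ℝ} (hx : x ∈ Ioo (0:ℝ) π) (r : ℝ) :
    Real.sin x ^ r = (1 - Real.cos x) ^ (r/2) * (1 + Real.cos x) ^ (r/2) := by
  obtain ⟨hu, hv, hs⟩ := uv_pos hx
  have hsq : Real.sin x ^ (2:ℝ) = (1 - Real.cos x) * (1 + Real.cos x) := by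
    rw [Real.rpow_two]; nlinarith [Real.sin_sq_add_cos_sq x]
  have h1 : Real.sin x ^ ((2:ℝ) * (r/2))
      = (1 - Real.cos x) ^ (r/2) * (1 + Real.cos x) ^ (r/2) := by
    rw [Real.rpow_mul hs.le, hsq, Real.mul_rpow hu.le hv.le]
  have h2 : (2:ℝ) * (r/2) = r := by ring
  rwa [h2] at h1

lemma tan_half_eq {x : ℝ} (hx : x ∈ Ioo (0:ℝ) π) :
    Real.tan (x/2) = Real.sin x / (1 + Real.cos x) := by
  have hc : 0 < Real.cos (x/2) := by
    apply Real.cos_pos_of_mem_Ioo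
    constructor <;> [nlinarith [hx.1, Real.pi_pos]; nlinarith [hx.2, Real.pi_pos]]
  have h1 : Real.sin x = 2 * Real.sin (x/2) * Real.cos (x/2) := by
    have := Real.sin_two_mul (x/2)
    rw [show 2 * (x/2) = x by ring] at this
    linarith
  have h2 : 1 + Real.cos x = 2 * Real.cos (x/2)^2 := by
    have h := Real.cos_sq (x/2)
    rw [show 2 * (x/2) = x by ring] at h
    nlinarith
  rw [Real.tan_eq_sin_div_cos, h1, h2]
  field_simp

lemma fint_eq_pow (a b : ℝ) (hb : 0 < b) {x : ℝ} (hx : x ∈ Ioo (0:ℝ) π) :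
    fint a b x = (1 - Real.cos x) ^ ((1-a)/(2*b) - 1/2)
      * (1 + Real.cos x) ^ (-((1+a)/(2*b)) - 1/2) := by
  obtain ⟨hu, hv, hs⟩ := uv_pos hx
  have hb' : b ≠ 0 := hb.ne'
  unfold fint
  rw [tan_half_eq hx, Real.div_rpow hs.le hv.le, ← mul_div_assoc,
    ← Real.rpow_add hs, sin_rpow_eq hx, mul_div_assoc, ← Real.rpow_sub hv]
  congr 1
  · congr 1; field_simp; ring
  · congr 1; field_simp; ring

lemma Df_eq (a b : ℝ) (hb : 0 < b) {x : ℝ} (hx : x ∈ Ioo (0:ℝ) π) :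
    Df a b x = fint a b x * ((1 - a * Real.cos x)/b) := by
  obtain ⟨hu, hv, hs⟩ := uv_pos hx
  have hb' : b ≠ 0 := hb.ne'
  have hs1 : Real.sin x
      = (1 - Real.cos x) ^ ((1:ℝ)/2) * (1 + Real.cos x) ^ ((1:ℝ)/2) := by
    have := sin_rpow_eq hx 1
    rwa [Real.rpow_one] at this
  set A := (1 - Real.cos x) ^ ((1-a)/(2*b) - 1/2) with hA
  set B := (1 + Real.cos x) ^ (-((1+a)/(2*b)) - 1/2) with hB
  have t1 : (1 - Real.cos x) ^ ((1:ℝ)/2) * (1 - Real.cos x) ^ ((1-a)/(2*b) - 1) = A := by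
    rw [← Real.rpow_add hu, hA]; congr 1; ring
  have t2 : (1 + Real.cos x) ^ ((1:ℝ)/2) * (1 + Real.cos x) ^ (-((1+a)/(2*b)))
      = B * (1 + Real.cos x) := by
    rw [← Real.rpow_add hv, hB, ← Real.rpow_add_one hv.ne']; congr 1; ring
  have t3 : (1 - Real.cos x) ^ ((1-a)/(2*b)) * (1 - Real.cos x) ^ ((1:ℝ)/2)
      = A * (1 - Real.cos x) := by
    rw [← Real.rpow_add hu, hA, ← Real.rpow_add_one hu.ne']; congr 1; ring
  have t4 : (1 + Real.cos x) ^ ((1:ℝ)/2) * (1 + Real.cos x) ^ (-((1+a)/(2*b)) - 1) = B := by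
    rw [← Real.rpow_add hv, hB]; congr 1; ring
  have expand : Df a b x = ((1-a)/(2*b)) *
      (((1 - Real.cos x) ^ ((1:ℝ)/2) * (1 - Real.cos x) ^ ((1-a)/(2*b) - 1)) *
       ((1 + Real.cos x) ^ ((1:ℝ)/2) * (1 + Real.cos x) ^ (-((1+a)/(2*b)))))
    + ((1+a)/(2*b)) *
      (((1 - Real.cos x) ^ ((1-a)/(2*b)) * (1 - Real.cos x) ^ ((1:ℝ)/2)) *
       ((1 + Real.cos x) ^ ((1:ℝ)/2) * (1 + Real.cos x) ^ (-((1+a)/(2*b)) - 1))) := by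
    unfold Df; rw [hs1]; ring
  rw [expand, t1, t2, t3, t4, fint_eq_pow a b hb hx, ← hA, ← hB]
  have key : ((1-a)/(2*b)) * (1 + Real.cos x) + ((1+a)/(2*b)) * (1 - Real.cos x)
      = (1 - a * Real.cos x)/b := by field_simp; ring
  linear_combination (A * B) * key

section

variable {a b : ℝ}

lemma one_sub_mul_cos_pos (ha : 0 < a) (ha1 : a < 1) (x : ℝ) :
    0 < 1 - a * Real.cos x := by
  nlinarith [Real.cos_le_one x, Real.neg_one_le_cos x]

lemma Hf_pos {x : ℝ} (hx : x ∈ Ioo (0:ℝ) π) : 0 < Hf a b x := by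
  obtain ⟨hu, hv, _⟩ := uv_pos hx
  exact mul_pos (Real.rpow_pos_of_pos hu _) (Real.rpow_pos_of_pos hv _)

lemma fint_pos (hb : 0 < b) {x : ℝ} (hx : x ∈ Ioo (0:ℝ) π) : 0 < fint a b x := by
  obtain ⟨hu, hv, _⟩ := uv_pos hx
  rw [fint_eq_pow a b hb hx]
  exact mul_pos (Real.rpow_pos_of_pos hu _) (Real.rpow_pos_of_pos hv _)

lemma Df_nonneg (ha : 0 < a) (ha1 : a < 1) (hb : 0 < b) {x : ℝ}
    (hx : x ∈ Ioo (0:ℝ) π) : 0 ≤ Df a b x := by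
  rw [Df_eq a b hb hx]
  exact le_of_lt (mul_pos (fint_pos hb hx)
    (div_pos (one_sub_mul_cos_pos ha ha1 x) hb))

lemma Hf_zero (ha1 : a < 1) (hb : 0 < b) : Hf a b 0 = 0 := by
  have h1 : (0:ℝ) < 1 - a := by linarith
  have h2 : ((1:ℝ) - a)/(2*b) ≠ 0 := by positivity
  simp [Hf, Real.zero_rpow h2]

lemma fint_zero (ha : 0 < a) (hb : 0 < b) : fint a b 0 = 0 := by
  have h1 : -(a/b) - 1 ≠ 0 := by
    have : 0 < a/b := div_pos ha hb
    intro h; nlinarith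
  simp [fint, Real.zero_rpow h1]

lemma Df_zero : Df a b 0 = 0 := by
  simp [Df]

lemma Hf_contOn (ha1 : a < 1) (hb : 0 < b) : ContinuousOn (Hf a b) (Ico 0 π) := by
  have h1 : (0:ℝ) < 1 - a := by linarith
  apply ContinuousOn.mul
  · apply ContinuousOn.rpow_const (by fun_prop)
    intro x hx
    right; positivity
  · apply ContinuousOn.rpow_const (by fun_prop)
    intro x hx
    rcases eq_or_lt_of_le hx.1 with h | h
    · left; rw [← h]; norm_num
    · left; exact (uv_pos ⟨h, hx.2⟩).2.1.ne'

lemma fint_contOn (hb : 0 < b) {x : ℝ} (hxπ : x ≤ π) :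
    ContinuousOn (fint a b) (Ioo 0 x) := by
  have hsub : Ioo (0:ℝ) x ⊆ Ioo 0 π := Ioo_subset_Ioo le_rfl hxπ
  apply ContinuousOn.congr (f := fun t =>
    (1 - Real.cos t) ^ ((1-a)/(2*b) - 1/2) * (1 + Real.cos t) ^ (-((1+a)/(2*b)) - 1/2))
  · apply ContinuousOn.mul
    · exact ContinuousOn.rpow_const (by fun_prop)
        (fun t ht => Or.inl (uv_pos (hsub ht)).1.ne')
    · exact ContinuousOn.rpow_const (by fun_prop)
        (fun t ht => Or.inl (uv_pos (hsub ht)).2.1.ne')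
  · exact fun t ht => fint_eq_pow a b hb (hsub ht)

lemma Df_intInt (ha : 0 < a) (ha1 : a < 1) (hb : 0 < b) {x : ℝ}
    (hx : x ∈ Ioo (0:ℝ) π) : IntervalIntegrable (Df a b) volume 0 x := by
  rw [intervalIntegrable_iff_integrableOn_Ioc_of_le hx.1.le]
  apply integrableOn_deriv_of_nonneg
    ((Hf_contOn ha1 hb).mono (Icc_subset_Ico_right hx.2))
  · exact fun t ht => hasDeriv_Hf a b ⟨ht.1, ht.2.trans hx.2⟩
  · exact fun t ht => Df_nonneg ha ha1 hb ⟨ht.1, ht.2.trans hx.2⟩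

lemma Df_integral (ha : 0 < a) (ha1 : a < 1) (hb : 0 < b) {x : ℝ}
    (hx : x ∈ Ioo (0:ℝ) π) : ∫ t in (0:ℝ)..x, Df a b t = Hf a b x := by
  have h := integral_eq_sub_of_hasDeriv_right_of_le hx.1.le
    ((Hf_contOn ha1 hb).mono (Icc_subset_Ico_right hx.2))
    (fun t ht => (hasDeriv_Hf a b ⟨ht.1, ht.2.trans hx.2⟩).hasDerivWithinAt)
    (Df_intInt ha ha1 hb hx)
  rw [h, Hf_zero ha1 hb, sub_zero]

lemma fint_intInt (ha : 0 < a) (ha1 : a < 1) (hb : 0 < b) {x : ℝ}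
    (hx : x ∈ Ioo (0:ℝ) π) : IntervalIntegrable (fint a b) volume 0 x := by
  rw [intervalIntegrable_iff_integrableOn_Ioo_of_le hx.1.le]
  have hDf : IntegrableOn (Df a b) (Ioo 0 x) := by
    have := Df_intInt ha ha1 hb hx
    rwa [intervalIntegrable_iff_integrableOn_Ioo_of_le hx.1.le] at this
  have hmeas : AEStronglyMeasurable (fint a b) (volume.restrict (Ioo 0 x)) :=
    (fint_contOn hb hx.2.le).aestronglyMeasurable measurableSet_Ioo
  apply Integrable.mono' (g := fun t => (b/(1-a)) * Df a b t)
    (hDf.const_mul _) hmeas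
  · filter_upwards [ae_restrict_mem measurableSet_Ioo] with t ht
    have ht' : t ∈ Ioo (0:ℝ) π := ⟨ht.1, ht.2.trans hx.2⟩
    have h1 := fint_pos (a := a) hb ht'
    have h2 := one_sub_mul_cos_pos ha ha1 t
    have h3 : 1 - a ≤ 1 - a * Real.cos t := by nlinarith [Real.cos_le_one t]
    rw [Real.norm_of_nonneg h1.le, Df_eq a b hb ht']
    have h4 : (0:ℝ) < 1 - a := by linarith
    rw [mul_comm (b/(1-a)), mul_assoc]
    nth_rewrite 1 [← mul_one (fint a b t)]
    apply mul_le_mul_of_nonneg_left _ h1.le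
    rw [div_mul_div_comm, le_div_iff₀ (by positivity)]
    nlinarith

lemma sandwich (ha : 0 < a) (ha1 : a < 1) (hb : 0 < b) {c x l ε : ℝ}
    (hc : 0 ≤ c) (hcx : c < x) (hx : x < π) (hε : 0 ≤ ε)
    (hbound : ∀ t ∈ Icc c x, |b/(1 - a * Real.cos t) - l| ≤ ε) :
    |(∫ t in c..x, fint a b t) - l * ∫ t in c..x, Df a b t|
      ≤ ε * ∫ t in c..x, Df a b t := by
  have hxm : x ∈ Ioo (0:ℝ) π := ⟨hc.trans_lt hcx, hx⟩
  have hsub : uIcc c x ⊆ uIcc 0 x := by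
    rw [uIcc_of_le hcx.le, uIcc_of_le hxm.1.le]
    exact Icc_subset_Icc hc le_rfl
  have hIf : IntervalIntegrable (fint a b) volume c x :=
    (fint_intInt ha ha1 hb hxm).mono_set hsub
  have hID : IntervalIntegrable (Df a b) volume c x :=
    (Df_intInt ha ha1 hb hxm).mono_set hsub
  rw [← intervalIntegral.integral_const_mul, ← intervalIntegral.integral_sub hIf
    (hID.const_mul l)]
  refine le_trans (intervalIntegral.abs_integral_le_integral_abs hcx.le) ?_
  rw [← intervalIntegral.integral_const_mul]
  apply intervalIntegral.integral_mono_on hcx.le ((hIf.sub (hID.const_mul l)).abs)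
    (hID.const_mul ε)
  intro t ht
  rcases eq_or_lt_of_le (hc.trans ht.1) with h0 | h0
  · rw [← h0, fint_zero ha hb, Df_zero]
    simp
  · have ht' : t ∈ Ioo (0:ℝ) π := ⟨h0, lt_of_le_of_lt ht.2 hx⟩
    have hd := one_sub_mul_cos_pos ha ha1 t
    have hfd : fint a b t = Df a b t * (b/(1 - a * Real.cos t)) := by
      rw [Df_eq a b hb ht']; field_simp
    rw [hfd]
    have h5 : Df a b t * (b/(1 - a * Real.cos t)) - l * Df a b t
        = Df a b t * (b/(1 - a * Real.cos t) - l) := by ring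
    rw [h5, abs_mul, abs_of_nonneg (Df_nonneg ha ha1 hb ht'), mul_comm (ε)]
    exact mul_le_mul_of_nonneg_left (hbound t ht) (Df_nonneg ha ha1 hb ht')

lemma psi_cont (ha : 0 < a) (ha1 : a < 1) :
    Continuous (fun t => b/(1 - a * Real.cos t)) := by
  apply Continuous.div continuous_const (by fun_prop)
  exact fun t => (one_sub_mul_cos_pos ha ha1 t).ne'

lemma tendsto_ratio_zero (ha : 0 < a) (ha1 : a < 1) (hb : 0 < b) :
    Tendsto (fun x => (∫ t in (0:ℝ)..x, fint a b t) / (b * Hf a b x))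
      (𝓝[Ioo (0:ℝ) π] 0) (𝓝 (1/(1-a))) := by
  rw [Metric.tendsto_nhdsWithin_nhds]
  intro ε hε
  have ha' : (0:ℝ) < 1 - a := by linarith
  have hδ := Metric.continuousAt_iff.1
    ((psi_cont ha ha1 (b := b)).continuousAt (x := (0:ℝ))) (b * ε / 2) (by positivity)
  obtain ⟨δ, hδpos, hδ⟩ := hδ
  refine ⟨δ, hδpos, fun x hx hxd => ?_⟩
  have hbound : ∀ t ∈ Icc 0 x, |b/(1 - a * Real.cos t) - b/(1-a)| ≤ b * ε / 2 := by
    intro t ht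
    have h1 : dist t 0 < δ := by
      rw [Real.dist_eq, sub_zero, abs_of_nonneg ht.1]
      calc t ≤ x := ht.2
        _ < δ := by rw [Real.dist_eq, sub_zero, abs_of_pos hx.1] at hxd; exact hxd
    have := (hδ h1).le
    rwa [Real.dist_eq, show (1:ℝ) - a * Real.cos 0 = 1 - a by simp] at this
  have key := sandwich ha ha1 hb (le_refl 0) hx.1 hx.2 (by positivity) hbound
  rw [Df_integral ha ha1 hb hx] at key
  have hH := Hf_pos (a := a) (b := b) hx
  rw [Real.dist_eq]
  have heq : (∫ t in (0:ℝ)..x, fint a b t) / (b * Hf a b x) - 1/(1-a)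
      = ((∫ t in (0:ℝ)..x, fint a b t) - b/(1-a) * Hf a b x) / (b * Hf a b x) := by
    field_simp
  rw [heq, abs_div, abs_of_pos (by positivity : (0:ℝ) < b * Hf a b x)]
  rw [div_lt_iff₀ (by positivity)]
  calc |(∫ t in (0:ℝ)..x, fint a b t) - b/(1-a) * Hf a b x| ≤ b * ε / 2 * Hf a b x := key
    _ < ε * (b * Hf a b x) := by nlinarith [mul_pos (mul_pos hb hε) hH]

lemma tendsto_Hf_top (ha : 0 < a) (ha1 : a < 1) (hb : 0 < b) :
    Tendsto (Hf a b) (𝓝[Ioo (0:ℝ) π] π) atTop := by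
  have h1 : Tendsto (fun x => (1 - Real.cos x) ^ ((1-a)/(2*b)))
      (𝓝[Ioo (0:ℝ) π] π) (𝓝 ((2:ℝ) ^ ((1-a)/(2*b)))) := by
    have hc : ContinuousAt (fun x => (1 - Real.cos x) ^ ((1-a)/(2*b))) π := by
      apply ContinuousAt.rpow_const (by fun_prop)
      left; rw [Real.cos_pi]; norm_num
    have := hc.tendsto.mono_left (nhdsWithin_le_nhds (s := Ioo (0:ℝ) π))
    rwa [Real.cos_pi, show (1:ℝ) - (-1) = 2 by norm_num] at this
  have h2 : Tendsto (fun x => (1 + Real.cos x) ^ (-((1+a)/(2*b))))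
      (𝓝[Ioo (0:ℝ) π] π) atTop := by
    have hq : (0:ℝ) < (1+a)/(2*b) := by positivity
    have hv : Tendsto (fun x => 1 + Real.cos x) (𝓝[Ioo (0:ℝ) π] π) (𝓝[>] 0) := by
      apply tendsto_nhdsWithin_of_tendsto_nhds_of_eventually_within
      · have hcc : ContinuousAt (fun x => 1 + Real.cos x) π := by fun_prop
        have := hcc.tendsto.mono_left (nhdsWithin_le_nhds (s := Ioo (0:ℝ) π))
        rwa [Real.cos_pi, show (1:ℝ) + (-1) = 0 by norm_num] at this
      · exact eventually_nhdsWithin_of_forall (fun x hx => (uv_pos hx).2.1)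
    have hpow : Tendsto (fun y : ℝ => y ^ ((1+a)/(2*b))) (𝓝[>] 0) (𝓝[>] 0) := by
      apply tendsto_nhdsWithin_of_tendsto_nhds_of_eventually_within
      · have hc : ContinuousAt (fun y : ℝ => y ^ ((1+a)/(2*b))) 0 :=
          Real.continuousAt_rpow_const 0 _ (Or.inr hq.le)
        have := hc.tendsto.mono_left (nhdsWithin_le_nhds (s := Ioi (0:ℝ)))
        rwa [Real.zero_rpow hq.ne'] at this
      · exact eventually_nhdsWithin_of_forall
          (fun y hy => Real.rpow_pos_of_pos hy _)
    have := (hpow.comp hv).inv_tendsto_nhdsGT_zero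
    apply this.congr'
    filter_upwards [eventually_nhdsWithin_of_forall
      (fun x (hx : x ∈ Ioo (0:ℝ) π) => (uv_pos hx).2.1)] with x hvx
    simp only [Function.comp, Pi.inv_apply]
    rw [← Real.rpow_neg hvx.le]
  have := Filter.Tendsto.pos_mul_atTop (C := (2:ℝ) ^ ((1-a)/(2*b)))
    (by positivity) h1 h2
  exact this

lemma tendsto_ratio_pi (ha : 0 < a) (ha1 : a < 1) (hb : 0 < b) :
    Tendsto (fun x => (∫ t in (0:ℝ)..x, fint a b t) / (b * Hf a b x))
      (𝓝[Ioo (0:ℝ) π] π) (𝓝 (1/(1+a))) := by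
  have hπ := Real.pi_pos
  rw [Metric.tendsto_nhds]
  intro ε hε
  have hδ := Metric.continuousAt_iff.1
    ((psi_cont ha ha1 (b := b)).continuousAt (x := π)) (b * ε / 4) (by positivity)
  obtain ⟨δ, hδpos, hδ⟩ := hδ
  set c := max (π - δ/2) (π/2) with hc_def
  have hcπ : c < π := by
    apply max_lt (by linarith) (by linarith)
  have hc0 : 0 < c := lt_of_lt_of_le (by linarith) (le_max_right _ _)
  have hcm : c ∈ Ioo (0:ℝ) π := ⟨hc0, hcπ⟩
  have hψc : ∀ t ∈ Icc c π, |b/(1 - a * Real.cos t) - b/(1+a)| ≤ b * ε / 4 := by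
    intro t ht
    have h1 : dist t π < δ := by
      rw [Real.dist_eq, abs_of_nonpos (by linarith [ht.2])]
      have hct := ht.1
      simp only [hc_def] at hct
      have : π - δ/2 ≤ t := le_trans (le_max_left _ _) hct
      linarith
    have := (hδ h1).le
    rwa [Real.dist_eq, show (1:ℝ) - a * Real.cos π = 1 + a by
      rw [Real.cos_pi]; ring] at this
  set C := |(∫ t in (0:ℝ)..c, fint a b t) - b/(1+a) * Hf a b c| with hC_def
  have hC0 : 0 ≤ C := abs_nonneg _
  set M := 4 * C / (b * ε) + 1 with hM_def
  have hM0 : 0 < M := by positivity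
  have hCM : C / (b * M) < ε / 4 := by
    rw [div_lt_iff₀ (by positivity)]
    have hbe : (0:ℝ) < b * ε := mul_pos hb hε
    have he : ε / 4 * (b * M) = C + b * ε / 4 := by
      rw [hM_def]; field_simp
    rw [he]; linarith
  filter_upwards [tendsto_Hf_top ha ha1 hb (eventually_ge_atTop M),
    eventually_nhdsWithin_of_eventually_nhds (eventually_gt_nhds hcπ),
    self_mem_nhdsWithin] with x hHM hcx (hx : x ∈ Ioo (0:ℝ) π)
  have hH := Hf_pos (a := a) (b := b) hx
  have hHc := Hf_pos (a := a) (b := b) hcm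
  have hsub : uIcc c x ⊆ uIcc 0 x := by
    rw [uIcc_of_le hcx.le, uIcc_of_le hx.1.le]
    exact Icc_subset_Icc hc0.le le_rfl
  have hIf : IntervalIntegrable (fint a b) volume c x :=
    (fint_intInt ha ha1 hb hx).mono_set hsub
  have hIfc : IntervalIntegrable (fint a b) volume 0 c := fint_intInt ha ha1 hb hcm
  have hID : IntervalIntegrable (Df a b) volume c x :=
    (Df_intInt ha ha1 hb hx).mono_set hsub
  have hadd : (∫ t in (0:ℝ)..c, fint a b t) + (∫ t in c..x, fint a b t)
      = ∫ t in (0:ℝ)..x, fint a b t :=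
    intervalIntegral.integral_add_adjacent_intervals hIfc hIf
  have haddD : (∫ t in c..x, Df a b t) = Hf a b x - Hf a b c := by
    have h2 : (∫ t in (0:ℝ)..c, Df a b t) + (∫ t in c..x, Df a b t)
        = ∫ t in (0:ℝ)..x, Df a b t :=
      intervalIntegral.integral_add_adjacent_intervals (Df_intInt ha ha1 hb hcm) hID
    rw [Df_integral ha ha1 hb hx, Df_integral ha ha1 hb hcm] at h2
    linarith
  have hsand := sandwich ha ha1 hb hc0.le hcx hx.2 (by positivity)
    (fun t ht => hψc t ⟨ht.1, ht.2.trans hx.2.le⟩)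
  rw [haddD] at hsand
  have hkey : |(∫ t in (0:ℝ)..x, fint a b t) - b/(1+a) * Hf a b x|
      ≤ C + b * ε / 4 * Hf a b x := by
    have e1 : (∫ t in (0:ℝ)..x, fint a b t) - b/(1+a) * Hf a b x
        = ((∫ t in (0:ℝ)..c, fint a b t) - b/(1+a) * Hf a b c)
          + ((∫ t in c..x, fint a b t) - b/(1+a) * (Hf a b x - Hf a b c)) := by
      rw [← hadd]; ring
    rw [e1]
    refine le_trans (abs_add_le _ _) (add_le_add le_rfl ?_)
    refine le_trans hsand ?_
    have : Hf a b x - Hf a b c ≤ Hf a b x := by linarith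
    nlinarith [mul_pos hb hε]
  rw [Real.dist_eq]
  have heq : (∫ t in (0:ℝ)..x, fint a b t) / (b * Hf a b x) - 1/(1+a)
      = ((∫ t in (0:ℝ)..x, fint a b t) - b/(1+a) * Hf a b x) / (b * Hf a b x) := by
    field_simp
  rw [heq, abs_div, abs_of_pos (by positivity : (0:ℝ) < b * Hf a b x),
    div_lt_iff₀ (by positivity)]
  have hMx : M ≤ Hf a b x := hHM
  have h2 : C / (b * Hf a b x) ≤ C / (b * M) := by
    apply div_le_div_of_nonneg_left hC0 (by positivity)
    · exact mul_le_mul_of_nonneg_left hMx hb.le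
  calc |(∫ t in (0:ℝ)..x, fint a b t) - b/(1+a) * Hf a b x|
      ≤ C + b * ε / 4 * Hf a b x := hkey
    _ < ε * (b * Hf a b x) := by
        have h3 : C < ε / 4 * (b * Hf a b x) := by
          have h4 := lt_of_le_of_lt h2 hCM
          rwa [div_lt_iff₀ (by positivity)] at h4
        nlinarith [mul_pos (mul_pos hb hε) hH]

lemma cot_Hf_eq (hb : 0 < b) {x : ℝ} (hx : x ∈ Ioo (0:ℝ) π) :
    Real.sin x ^ (a/b) * Real.cot (x/2) ^ ((1:ℝ)/b) * Hf a b x = 1 := by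
  obtain ⟨hu, hv, hs⟩ := uv_pos hx
  have hb' : b ≠ 0 := hb.ne'
  have hcot : Real.cot (x/2) = (1 + Real.cos x) / Real.sin x := by
    rw [Real.cot_eq_cos_div_sin, ← inv_div, ← Real.tan_eq_sin_div_cos, tan_half_eq hx,
      inv_div]
  have hcpow : Real.cot (x/2) ^ ((1:ℝ)/b)
      = (1 + Real.cos x) ^ ((1:ℝ)/b) * Real.sin x ^ (-((1:ℝ)/b)) := by
    rw [hcot, Real.div_rpow hv.le hs.le, div_eq_mul_inv, ← Real.rpow_neg hs.le]
  rw [hcpow]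
  unfold Hf
  calc Real.sin x ^ (a/b) * ((1 + Real.cos x) ^ ((1:ℝ)/b) * Real.sin x ^ (-((1:ℝ)/b)))
        * ((1 - Real.cos x) ^ ((1-a)/(2*b)) * (1 + Real.cos x) ^ (-((1+a)/(2*b))))
      = (Real.sin x ^ (a/b) * Real.sin x ^ (-((1:ℝ)/b)))
        * (((1 + Real.cos x) ^ ((1:ℝ)/b) * (1 + Real.cos x) ^ (-((1+a)/(2*b))))
          * (1 - Real.cos x) ^ ((1-a)/(2*b))) := by ring
    _ = (Real.sin x ^ (a/b + -((1:ℝ)/b)))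
        * ((1 + Real.cos x) ^ ((1:ℝ)/b + -((1+a)/(2*b)))
          * (1 - Real.cos x) ^ ((1-a)/(2*b))) := by
        rw [← Real.rpow_add hs, ← Real.rpow_add hv]
    _ = ((1 - Real.cos x) ^ ((a/b + -((1:ℝ)/b))/2) * (1 + Real.cos x) ^ ((a/b + -((1:ℝ)/b))/2))
        * ((1 + Real.cos x) ^ ((1:ℝ)/b + -((1+a)/(2*b)))
          * (1 - Real.cos x) ^ ((1-a)/(2*b))) := by rw [sin_rpow_eq hx]
    _ = ((1 - Real.cos x) ^ ((a/b + -((1:ℝ)/b))/2) * (1 - Real.cos x) ^ ((1-a)/(2*b)))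
        * ((1 + Real.cos x) ^ ((a/b + -((1:ℝ)/b))/2)
          * (1 + Real.cos x) ^ ((1:ℝ)/b + -((1+a)/(2*b)))) := by ring
    _ = (1 - Real.cos x) ^ ((a/b + -((1:ℝ)/b))/2 + (1-a)/(2*b))
        * (1 + Real.cos x) ^ ((a/b + -((1:ℝ)/b))/2 + ((1:ℝ)/b + -((1+a)/(2*b)))) := by
        rw [← Real.rpow_add hu, ← Real.rpow_add hv]
    _ = 1 := by
        rw [show (a/b + -((1:ℝ)/b))/2 + (1-a)/(2*b) = 0 by field_simp; ring,
          show (a/b + -((1:ℝ)/b))/2 + ((1:ℝ)/b + -((1+a)/(2*b))) = 0 by field_simp; ring,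
          Real.rpow_zero, Real.rpow_zero, mul_one]

noncomputable def Zf (a b x : ℝ) : ℝ :=
  if x ≤ 0 then 1/(1-a) else if x < π then
    (∫ t in (0:ℝ)..x, fint a b t) / (b * Hf a b x) else 1/(1+a)

lemma Zf_zero : Zf a b 0 = 1/(1-a) := by simp [Zf]

lemma Zf_pi : Zf a b π = 1/(1+a) := by
  have hπ := Real.pi_pos
  rw [Zf, if_neg (not_le.mpr hπ), if_neg (lt_irrefl π)]

lemma Zf_mid {x : ℝ} (hx : x ∈ Ioo (0:ℝ) π) :
    Zf a b x = (∫ t in (0:ℝ)..x, fint a b t) / (b * Hf a b x) := by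
  rw [Zf, if_neg (not_le.mpr hx.1), if_pos hx.2]

lemma Zf_contOn (ha : 0 < a) (ha1 : a < 1) (hb : 0 < b) :
    ContinuousOn (Zf a b) (Icc 0 π) := by
  have hπ := Real.pi_pos
  have hratio_cont : ∀ x ∈ Ioo (0:ℝ) π,
      ContinuousAt (fun y => (∫ t in (0:ℝ)..y, fint a b t) / (b * Hf a b y)) x := by
    intro x hx
    have hF : ContinuousAt (fun y => ∫ t in (0:ℝ)..y, fint a b t) x :=
      (intervalIntegral.integral_hasDerivAt_right (fint_intInt ha ha1 hb hx)
        ((fint_contOn hb le_rfl).stronglyMeasurableAtFilter isOpen_Ioo x hx)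
        ((fint_contOn hb le_rfl).continuousAt (Ioo_mem_nhds hx.1 hx.2))).continuousAt
    have hH : ContinuousAt (Hf a b) x := (hasDeriv_Hf a b hx).continuousAt
    exact hF.div (continuousAt_const.mul hH)
      (mul_pos hb (Hf_pos (a := a) (b := b) hx)).ne'
  intro x hx
  rcases eq_or_lt_of_le hx.1 with h0 | h0
  · subst h0
    rw [← continuousWithinAt_diff_self]
    have hIccd : Icc (0:ℝ) π \ {0} = Ioc 0 π := Icc_diff_left
    rw [hIccd]
    have hfe : 𝓝[Ioo (0:ℝ) π] (0:ℝ) = 𝓝[Ioc 0 π] (0:ℝ) := by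
      have hset : Ioc (0:ℝ) π ∩ Iio π = Ioo 0 π := by
        ext t
        simp only [mem_inter_iff, mem_Ioc, mem_Iio, mem_Ioo]
        constructor
        · rintro ⟨⟨h1, _⟩, h3⟩; exact ⟨h1, h3⟩
        · rintro ⟨h1, h2⟩; exact ⟨⟨h1, h2.le⟩, h2⟩
      rw [← hset]
      exact nhdsWithin_inter_of_mem' (mem_nhdsWithin_of_mem_nhds (Iio_mem_nhds hπ))
    show Tendsto (Zf a b) (𝓝[Ioc (0:ℝ) π] 0) (𝓝 (Zf a b 0))
    rw [← hfe, Zf_zero]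
    exact Tendsto.congr'
      (eventually_nhdsWithin_of_forall (fun y hy => (Zf_mid hy).symm))
      (tendsto_ratio_zero ha ha1 hb)
  · rcases eq_or_lt_of_le hx.2 with hπx | hπx
    · rw [hπx]
      rw [← continuousWithinAt_diff_self]
      have hIccd : Icc (0:ℝ) π \ {π} = Ico 0 π := Icc_sdiff_right
      rw [hIccd]
      have hfe : 𝓝[Ioo (0:ℝ) π] π = 𝓝[Ico 0 π] π := by
        have hset : Ico (0:ℝ) π ∩ Ioi 0 = Ioo 0 π := by
          ext t
          simp only [mem_inter_iff, mem_Ico, mem_Ioi, mem_Ioo]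
          constructor
          · rintro ⟨⟨_, h2⟩, h3⟩; exact ⟨h3, h2⟩
          · rintro ⟨h1, h2⟩; exact ⟨⟨h1.le, h2⟩, h1⟩
        rw [← hset]
        exact nhdsWithin_inter_of_mem' (mem_nhdsWithin_of_mem_nhds (Ioi_mem_nhds hπ))
      show Tendsto (Zf a b) (𝓝[Ico (0:ℝ) π] π) (𝓝 (Zf a b π))
      rw [← hfe, Zf_pi]
      exact Tendsto.congr'
        (eventually_nhdsWithin_of_forall (fun y hy => (Zf_mid hy).symm))
        (tendsto_ratio_pi ha ha1 hb)
    · have hc := hratio_cont x ⟨h0, hπx⟩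
      exact (hc.congr (Filter.eventuallyEq_of_mem (Ioo_mem_nhds h0 hπx)
        (fun y hy => (Zf_mid hy).symm))).continuousWithinAt

end

end Stmt18Aux

open Stmt18Aux in
/-- For `a, b > 0` with `2a + b < 2`, the even extension of
`y₀(x) = (1/b)(sin x)^{a/b}(cot(x/2))^{1/b} ∫₀ˣ (sin t)^{-a/b-1}(tan(t/2))^{1/b} dt`
extends to a continuous function on `[−π, π]` with `y₀(±π) = 1/(1+a)` and
`y₀(0) = 1/(1−a)`; in particular `y₀` satisfies periodic boundary conditions. -/
theorem stmt18 (a b : ℝ) (ha : 0 < a) (hb : 0 < b) (hab : 2*a + b < 2) :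
    ∃ Y : ℝ → ℝ, ContinuousOn Y (Icc (-π) π) ∧
      (∀ x ∈ Ioo (0:ℝ) π,
        Y x = (1/b) * (Real.sin x) ^ (a/b) * (Real.cot (x/2)) ^ ((1:ℝ)/b) *
          ∫ t in (0:ℝ)..x, (Real.sin t) ^ (-(a/b) - 1) * (Real.tan (t/2)) ^ ((1:ℝ)/b)) ∧
      (∀ x ∈ Ioo (-π) (0:ℝ), Y x = Y (-x)) ∧
      Y (-π) = 1/(1+a) ∧ Y π = 1/(1+a) ∧ Y 0 = 1/(1-a) := by
  have ha1 : a < 1 := by linarith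
  have hπ := Real.pi_pos
  refine ⟨fun x => Zf a b |x|, ?_, ?_, ?_, ?_, ?_, ?_⟩
  · exact (Zf_contOn ha ha1 hb).comp continuous_abs.continuousOn
      (fun x hx => ⟨abs_nonneg x, abs_le.2 ⟨hx.1, hx.2⟩⟩)
  · intro x hx
    show Zf a b |x| = _
    have habs : |x| = x := abs_of_pos hx.1
    rw [habs, Zf_mid hx]
    have hK := cot_Hf_eq (a := a) hb hx
    have hH := Hf_pos (a := a) (b := b) hx
    have h1 : (1/b) * Real.sin x ^ (a/b) * Real.cot (x/2) ^ ((1:ℝ)/b) *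
        (∫ t in (0:ℝ)..x, (Real.sin t) ^ (-(a/b) - 1) * (Real.tan (t/2)) ^ ((1:ℝ)/b))
        = (Real.sin x ^ (a/b) * Real.cot (x/2) ^ ((1:ℝ)/b) * Hf a b x) *
          ((∫ t in (0:ℝ)..x, fint a b t) / (b * Hf a b x)) := by
      rw [show (∫ t in (0:ℝ)..x, (Real.sin t) ^ (-(a/b) - 1) * (Real.tan (t/2)) ^ ((1:ℝ)/b))
        = ∫ t in (0:ℝ)..x, fint a b t from rfl]
      field_simp
    rw [h1, hK, one_mul]
  · intro x _
    simp only [abs_neg]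
  · show Zf a b |(-π)| = _
    rw [show |(-π)| = π by rw [abs_neg, abs_of_pos hπ], Zf_pi]
  · show Zf a b |π| = _
    rw [abs_of_pos hπ, Zf_pi]
  · show Zf a b |(0:ℝ)| = _
    rw [abs_zero, Zf_zero]
end

section
/- Let a, b > 0 with 2a + b < 2 and y₀ the continuous periodic solution of My₀ = 1 as above. Then ∫_{-π}^{π} y₀(x)·(1 − (a+b) cos x) dx = 2π; in particular y₀ is not orthogonal to the function 1 − (a+b) cos x in L²(-π, π). -/
open MeasureTheory Set intervalIntegral
open scoped Real

namespace Stmt19Aux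

/-- The integrand of the auxiliary integral. -/
noncomputable def h (α β t : ℝ) : ℝ := Real.sin t ^ (-α - 1) * Real.tan (t/2) ^ β

lemma h_contAt {α β x : ℝ} (hx : x ∈ Ioo (0:ℝ) π) : ContinuousAt (h α β) x := by
  have hs : 0 < Real.sin x := Real.sin_pos_of_pos_of_lt_pi hx.1 hx.2
  have hc2 : Real.cos (x/2) ≠ 0 := by
    have : 0 < Real.cos (x/2) := Real.cos_pos_of_mem_Ioo
      ⟨by nlinarith [Real.pi_pos, hx.1], by nlinarith [hx.2]⟩
    exact this.ne'
  have h1 : ContinuousAt (fun t => Real.sin t ^ (-α - 1)) x :=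
    (Real.continuous_sin.continuousAt).rpow_const (Or.inl hs.ne')
  have htan : ContinuousAt (fun t : ℝ => Real.tan (t/2)) x := by
    have ht2 : ContinuousAt Real.tan (x/2) := Real.continuousAt_tan.mpr hc2
    have hd : ContinuousAt (fun t : ℝ => t/2) x := continuousAt_id.div_const 2
    exact ContinuousAt.comp (f := fun t : ℝ => t/2) ht2 hd
  have h2 : ContinuousAt (fun t => Real.tan (t/2) ^ β) x := by
    have htpos : 0 < Real.tan (x/2) := Real.tan_pos_of_pos_of_lt_pi_div_two
      (by linarith [hx.1]) (by linarith [hx.2])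
    exact htan.rpow_const (Or.inl htpos.ne')
  exact h1.mul h2

lemma h_nonneg {α β t : ℝ} (ht : t ∈ Ioo (0:ℝ) π) : 0 ≤ h α β t := by
  have hs : 0 < Real.sin t := Real.sin_pos_of_pos_of_lt_pi ht.1 ht.2
  have htt : 0 < Real.tan (t/2) := Real.tan_pos_of_pos_of_lt_pi_div_two
    (by linarith [ht.1]) (by linarith [ht.2])
  simp only [h]
  positivity

lemma h_intble {α β : ℝ} (hα : 0 < α) (hαβ : α < β) {x : ℝ} (hx : x ∈ Ioo (0:ℝ) π) :
    IntervalIntegrable (h α β) volume 0 x := by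
  have hπ := Real.pi_pos
  set c := min x (π/2) with hc
  have hc0 : 0 < c := lt_min hx.1 (by linarith)
  have hcx : c ≤ x := min_le_left _ _
  have hc2 : c ≤ π/2 := min_le_right _ _
  have hcπ : c < π := by linarith
  -- piece on [0, c] by comparison with t ^ (β - α - 1)
  have piece1 : IntervalIntegrable (h α β) volume 0 c := by
    rw [intervalIntegrable_iff, uIoc_of_le hc0.le]
    have hexp : (-1 : ℝ) < β - α - 1 := by linarith
    have hg : IntegrableOn (fun t : ℝ => (2/π) ^ (-α-1) * t ^ (β - α - 1)) (Ioc 0 c) := by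
      have := (intervalIntegral.intervalIntegrable_rpow' (a := 0) (b := c) hexp).const_mul
        ((2/π) ^ (-α-1))
      rw [intervalIntegrable_iff, uIoc_of_le hc0.le] at this
      exact this
    apply Integrable.mono' hg
    · apply ContinuousOn.aestronglyMeasurable _ measurableSet_Ioc
      intro t ht
      exact (h_contAt ⟨ht.1, lt_of_le_of_lt (ht.2.trans hc2) (by linarith)⟩).continuousWithinAt
    · rw [ae_restrict_iff' measurableSet_Ioc]
      filter_upwards with t ht
      have ht0 : 0 < t := ht.1
      have htc : t ≤ c := ht.2
      have ht2 : t ≤ π/2 := htc.trans hc2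
      have htπ : t < π := by linarith
      have hs : 0 < Real.sin t := Real.sin_pos_of_pos_of_lt_pi ht0 htπ
      have htt : 0 < Real.tan (t/2) := Real.tan_pos_of_pos_of_lt_pi_div_two
        (by linarith) (by linarith)
      have hjordan : 2/π * t ≤ Real.sin t := Real.mul_le_sin ht0.le ht2
      have hjpos : 0 < 2/π * t := by positivity
      have b1 : Real.sin t ^ (-α-1) ≤ (2/π * t) ^ (-α-1) :=
        Real.rpow_le_rpow_of_nonpos hjpos hjordan (by linarith)
      have hcos : (1:ℝ)/2 ≤ Real.cos (t/2) := by
        have h3 : Real.cos (t/2) ≥ Real.cos (π/3) := by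
          apply Real.cos_le_cos_of_nonneg_of_le_pi (by linarith) (by linarith) (by linarith)
        rwa [Real.cos_pi_div_three] at h3
      have btan : Real.tan (t/2) ≤ t := by
        rw [Real.tan_eq_sin_div_cos]
        have hsle : Real.sin (t/2) ≤ t/2 := Real.sin_le (by linarith)
        calc Real.sin (t/2) / Real.cos (t/2) ≤ (t/2) / (1/2) :=
              div_le_div₀ (by linarith) hsle (by norm_num) hcos
          _ = t := by ring
      have b2 : Real.tan (t/2) ^ β ≤ t ^ β :=
        Real.rpow_le_rpow htt.le btan (by linarith)
      have hnn : 0 ≤ h α β t := h_nonneg ⟨ht0, htπ⟩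
      rw [Real.norm_eq_abs, abs_of_nonneg hnn]
      have : h α β t ≤ (2/π * t) ^ (-α-1) * t ^ β := by
        apply mul_le_mul b1 b2 (Real.rpow_nonneg htt.le β) (Real.rpow_nonneg hjpos.le _)
      refine this.trans (le_of_eq ?_)
      rw [Real.mul_rpow (by positivity) ht0.le, mul_assoc, ← Real.rpow_add ht0]
      ring_nf
  -- piece on [c, x] by continuity
  have piece2 : IntervalIntegrable (h α β) volume c x := by
    apply ContinuousOn.intervalIntegrable
    intro t ht
    rw [uIcc_of_le hcx] at ht
    exact (h_contAt ⟨lt_of_lt_of_le hc0 ht.1, lt_of_le_of_lt ht.2 hx.2⟩).continuousWithinAt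
  exact piece1.trans piece2

lemma hasDerivAt_Q {α β x : ℝ} (hx : x ∈ Ioo (0:ℝ) π) :
    HasDerivAt (fun z => Real.sin z ^ (α+1) * Real.tan (z/2) ^ (-β))
      (((α+1) * Real.cos x - β) * (Real.sin x ^ α * Real.tan (x/2) ^ (-β))) x := by
  have hπ := Real.pi_pos
  have hs : 0 < Real.sin x := Real.sin_pos_of_pos_of_lt_pi hx.1 hx.2
  have hs2 : 0 < Real.sin (x/2) := Real.sin_pos_of_pos_of_lt_pi (by linarith [hx.1])
    (by linarith [hx.2])
  have hc2 : 0 < Real.cos (x/2) := Real.cos_pos_of_mem_Ioo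
    ⟨by linarith [hx.1], by linarith [hx.2]⟩
  have ht : 0 < Real.tan (x/2) := Real.tan_pos_of_pos_of_lt_pi_div_two
    (by linarith [hx.1]) (by linarith [hx.2])
  have d1 : HasDerivAt (fun z => Real.sin z ^ (α+1))
      (((α+1) * Real.sin x ^ (α+1-1)) * Real.cos x) x :=
    (Real.hasDerivAt_rpow_const (p := α+1) (Or.inl hs.ne')).comp x (Real.hasDerivAt_sin x)
  have dt : HasDerivAt (fun z : ℝ => Real.tan (z/2)) (1 / Real.cos (x/2)^2 * (1/2)) x :=
    by have := (Real.hasDerivAt_tan hc2.ne').comp x ((hasDerivAt_id x).div_const 2); exact this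
  have d2 : HasDerivAt (fun z => Real.tan (z/2) ^ (-β))
      (((-β) * Real.tan (x/2) ^ (-β-1)) * (1 / Real.cos (x/2)^2 * (1/2))) x :=
    by have := (Real.hasDerivAt_rpow_const (p := -β) (Or.inl ht.ne')).comp x dt; exact this
  have d := d1.fun_mul d2
  refine d.congr_deriv ?_
  have e1 : Real.sin x ^ (α+1-1) = Real.sin x ^ α := by norm_num
  have e2 : Real.sin x ^ (α+1) = Real.sin x ^ α * Real.sin x := Real.rpow_add_one hs.ne' α
  have e3 : Real.tan (x/2) ^ (-β-1) = Real.tan (x/2) ^ (-β) / Real.tan (x/2) :=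
    Real.rpow_sub_one ht.ne' (-β)
  have e4 : Real.sin x = 2 * Real.sin (x/2) * Real.cos (x/2) := by
    rw [show x = 2 * (x/2) by ring, Real.sin_two_mul]; ring_nf
  rw [e1, e2, e3, Real.tan_eq_sin_div_cos, e4]
  field_simp
  ring

end Stmt19Aux

open Stmt19Aux

/-- For `a, b > 0` with `2a + b < 2` and `y₀` the continuous even periodic
solution of `My₀ = 1`, one has `∫_{-π}^{π} y₀(x)(1 − (a+b) cos x) dx = 2π`; in particular
`y₀` is not orthogonal to `1 − (a+b) cos x` in `L²(-π, π)`. -/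
theorem stmt19 (a b : ℝ) (ha : 0 < a) (hb : 0 < b) (hab : 2*a + b < 2)
    (y₀ : ℝ → ℝ)
    (hy₀even : ∀ x, y₀ (-x) = y₀ x)
    (hy₀ : ∀ x ∈ Ioo (0:ℝ) π,
      y₀ x = (1/b) * (Real.sin x) ^ (a/b) * (Real.cot (x/2)) ^ ((1:ℝ)/b) *
        ∫ t in (0:ℝ)..x, (Real.sin t) ^ (-(a/b) - 1) * (Real.tan (t/2)) ^ ((1:ℝ)/b))
    (hy₀cont : ContinuousOn y₀ (Icc (-π) π)) :
    (∫ x in (-π)..π, y₀ x * (1 - (a+b) * Real.cos x)) = 2*π ∧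
    (∫ x in (-π)..π, y₀ x * (1 - (a+b) * Real.cos x)) ≠ 0 := by
  have hπ := Real.pi_pos
  have hb0 : b ≠ 0 := hb.ne'
  set α : ℝ := a/b with hαdef
  set β : ℝ := 1/b with hβdef
  have hα : 0 < α := div_pos ha hb
  have hβ : 0 < β := by positivity
  have ha1 : a < 1 := by linarith
  have hαβ : α < β := by
    rw [hαdef, hβdef, div_lt_div_iff₀ hb hb]
    nlinarith
  -- the auxiliary integral function
  set F : ℝ → ℝ := fun z => ∫ t in (0:ℝ)..z, Real.sin t ^ (-α - 1) * Real.tan (t/2) ^ β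
    with hF
  have hy₀' : ∀ x ∈ Ioo (0:ℝ) π,
      y₀ x = (1/b) * (Real.sin x ^ α * Real.tan (x/2) ^ (-β)) * F x := by
    intro x hx
    have hs : 0 < Real.sin x := Real.sin_pos_of_pos_of_lt_pi hx.1 hx.2
    have hc2 : 0 < Real.cos (x/2) := Real.cos_pos_of_mem_Ioo
      ⟨by linarith [hx.1], by linarith [hx.2]⟩
    have hs2 : 0 < Real.sin (x/2) := Real.sin_pos_of_pos_of_lt_pi (by linarith [hx.1])
      (by linarith [hx.2])
    have ht : 0 < Real.tan (x/2) := Real.tan_pos_of_pos_of_lt_pi_div_two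
      (by linarith [hx.1]) (by linarith [hx.2])
    have hcot : Real.cot (x/2) = (Real.tan (x/2))⁻¹ := by
      rw [Real.cot_eq_cos_div_sin, Real.tan_eq_sin_div_cos, inv_div]
    have hcotβ : Real.cot (x/2) ^ β = Real.tan (x/2) ^ (-β) := by
      rw [hcot, Real.inv_rpow ht.le, ← Real.rpow_neg ht.le]
    rw [hy₀ x hx, hcotβ]
    simp only [hF]
    ring
  -- the function f' which is the derivative of sin x * y₀ x on (0, π)
  set f' : ℝ → ℝ := fun z => (1 - y₀ z * (1 - (a+b) * Real.cos z)) / b with hf'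
  have key : ∀ z, y₀ z * (1 - (a+b) * Real.cos z) = 1 - b * f' z := by
    intro z
    rw [hf']
    field_simp
    ring
  -- derivative of g = sin * y₀ on the open interval
  have hderiv : ∀ x ∈ Ioo (0:ℝ) π,
      HasDerivWithinAt (fun z => Real.sin z * y₀ z) (f' x) (Ioi x) x := by
    intro x hx
    have hs : 0 < Real.sin x := Real.sin_pos_of_pos_of_lt_pi hx.1 hx.2
    have ht : 0 < Real.tan (x/2) := Real.tan_pos_of_pos_of_lt_pi_div_two
      (by linarith [hx.1]) (by linarith [hx.2])
    -- derivative of F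
    have hFd : HasDerivAt F (h α β x) x := by
      apply intervalIntegral.integral_hasDerivAt_right (h_intble hα hαβ hx)
      · have hcOn : ContinuousOn (h α β) (Ioo 0 π) :=
          fun t htt => (h_contAt htt).continuousWithinAt
        exact ⟨Ioo 0 π, Ioo_mem_nhds hx.1 hx.2,
          hcOn.aestronglyMeasurable measurableSet_Ioo⟩
      · exact h_contAt hx
    have hQd := hasDerivAt_Q (α := α) (β := β) hx
    have hD := (hQd.mul hFd).const_mul (1/b)
    -- transfer to sin * y₀ via local equality
    have hev : (fun z => Real.sin z * y₀ z) =ᶠ[nhds x]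
        (fun z => (1/b) * ((Real.sin z ^ (α+1) * Real.tan (z/2) ^ (-β)) * F z)) := by
      filter_upwards [Ioo_mem_nhds hx.1 hx.2] with z hz
      have hsz : 0 < Real.sin z := Real.sin_pos_of_pos_of_lt_pi hz.1 hz.2
      rw [hy₀' z hz, Real.rpow_add_one hsz.ne' α]
      ring
    have hD' : HasDerivAt (fun z => Real.sin z * y₀ z)
        (1/b * ((((α+1) * Real.cos x - β) * (Real.sin x ^ α * Real.tan (x/2) ^ (-β))) * F x +
          (Real.sin x ^ (α+1) * Real.tan (x/2) ^ (-β)) * h α β x)) x :=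
      hD.congr_of_eventuallyEq hev
    have hQh : (Real.sin x ^ (α+1) * Real.tan (x/2) ^ (-β)) * h α β x = 1 := by
      rw [h]
      rw [show Real.sin x ^ (α+1) * Real.tan (x/2) ^ (-β) *
          (Real.sin x ^ (-α-1) * Real.tan (x/2) ^ β) =
          (Real.sin x ^ (α+1) * Real.sin x ^ (-α-1)) *
          (Real.tan (x/2) ^ (-β) * Real.tan (x/2) ^ β) by ring,
        ← Real.rpow_add hs, ← Real.rpow_add ht]
      norm_num
    have hval : 1/b * ((((α+1) * Real.cos x - β) * (Real.sin x ^ α * Real.tan (x/2) ^ (-β))) *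
        F x + (Real.sin x ^ (α+1) * Real.tan (x/2) ^ (-β)) * h α β x) = f' x := by
      rw [hQh, hf']
      have hPF : Real.sin x ^ α * Real.tan (x/2) ^ (-β) * F x = b * y₀ x := by
        rw [hy₀' x hx]
        field_simp
      rw [mul_assoc (((α+1) * Real.cos x - β)), hPF, hαdef, hβdef]
      field_simp
      ring
    rw [hval] at hD'
    exact hD'.hasDerivWithinAt
  -- continuity facts
  have hy₀c : ContinuousOn y₀ (Icc 0 π) :=
    hy₀cont.mono (Icc_subset_Icc (by linarith) le_rfl)
  have hgc : ContinuousOn (fun z => Real.sin z * y₀ z) (Icc 0 π) :=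
    (Real.continuous_sin.continuousOn).mul hy₀c
  have hf'c : ContinuousOn f' (Icc 0 π) := by
    apply ContinuousOn.div_const
    exact continuousOn_const.sub (hy₀c.mul (continuousOn_const.sub
      (continuousOn_const.mul Real.continuous_cos.continuousOn)))
  have hf'int : IntervalIntegrable f' volume 0 π := by
    apply ContinuousOn.intervalIntegrable
    rwa [uIcc_of_le hπ.le]
  -- FTC
  have hFTC : (∫ z in (0:ℝ)..π, f' z) =
      Real.sin π * y₀ π - Real.sin 0 * y₀ 0 :=
    intervalIntegral.integral_eq_sub_of_hasDeriv_right_of_le hπ.le hgc hderiv hf'int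
  have hFTC0 : (∫ z in (0:ℝ)..π, f' z) = 0 := by
    rw [hFTC, Real.sin_pi, Real.sin_zero]; ring
  -- integral over [0, π]
  have I1 : (∫ x in (0:ℝ)..π, y₀ x * (1 - (a+b) * Real.cos x)) = π := by
    have : (∫ x in (0:ℝ)..π, y₀ x * (1 - (a+b) * Real.cos x)) =
        ∫ x in (0:ℝ)..π, (1 - b * f' x) := by
      apply intervalIntegral.integral_congr
      intro z _
      exact key z
    rw [this, intervalIntegral.integral_sub intervalIntegrable_const (hf'int.const_mul b),
      intervalIntegral.integral_const_mul, hFTC0, intervalIntegral.integral_const]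
    simp
  -- integral over [-π, 0] equals integral over [0, π] by evenness
  have I2 : (∫ x in (-π)..(0:ℝ), y₀ x * (1 - (a+b) * Real.cos x)) = π := by
    have hcomp : (∫ x in (0:ℝ)..π, y₀ (-x) * (1 - (a+b) * Real.cos (-x))) =
        ∫ x in (-π)..(0:ℝ), y₀ x * (1 - (a+b) * Real.cos x) := by
      rw [intervalIntegral.integral_comp_neg (fun x => y₀ x * (1 - (a+b) * Real.cos x))]
      norm_num
    rw [← hcomp]
    have : (∫ x in (0:ℝ)..π, y₀ (-x) * (1 - (a+b) * Real.cos (-x))) =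
        ∫ x in (0:ℝ)..π, y₀ x * (1 - (a+b) * Real.cos x) := by
      apply intervalIntegral.integral_congr
      intro z _
      show y₀ (-z) * (1 - (a+b) * Real.cos (-z)) = y₀ z * (1 - (a+b) * Real.cos z)
      rw [hy₀even, Real.cos_neg]
    rw [this, I1]
  -- combine
  have hcont_full : ContinuousOn (fun x => y₀ x * (1 - (a+b) * Real.cos x)) (Icc (-π) π) :=
    hy₀cont.mul (continuousOn_const.sub
      (continuousOn_const.mul Real.continuous_cos.continuousOn))
  have hint1 : IntervalIntegrable (fun x => y₀ x * (1 - (a+b) * Real.cos x)) volume (-π) 0 := by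
    apply ContinuousOn.intervalIntegrable
    apply hcont_full.mono
    rw [uIcc_of_le (by linarith : (-π:ℝ) ≤ 0)]
    exact Icc_subset_Icc le_rfl hπ.le
  have hint2 : IntervalIntegrable (fun x => y₀ x * (1 - (a+b) * Real.cos x)) volume 0 π := by
    apply ContinuousOn.intervalIntegrable
    apply hcont_full.mono
    rw [uIcc_of_le hπ.le]
    exact Icc_subset_Icc (by linarith) le_rfl
  have Itotal : (∫ x in (-π)..π, y₀ x * (1 - (a+b) * Real.cos x)) = 2*π := by
    rw [← intervalIntegral.integral_add_adjacent_intervals hint1 hint2, I1, I2]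
    ring
  exact ⟨Itotal, by rw [Itotal]; positivity⟩
end
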